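/- arXiv:1807.07067 — 4 statements merged into one kernel-verified Lean document; each statement's English description precedes it below -/
import Mathlib

section
/- Let N = (G, c) be a flow network, A1, A2 ⊆ Ein with A1 ∩ A2 = ∅, and B ⊆ Eout. Consider all pairs of functions f, f′ : E → ℝ≥0 such that f + f′ is a feasible flow, f′(A2) = f′(B) = maxFromTo_N(A2, B), and (f + f′)(e) = 0 for every e ∈ (Ein \ (A1 ∪ A2)) ∪ (Eout \ B). Then the supremum of f(A1) over all such pairs equals the supremum of f(B) over all such pairs; that is, definitions (3) and (4) of maxFromToAft_N(A1, B | A2, B) agree. -/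
set_option linter.unusedSectionVars false
set_option linter.unusedVariables false


open Finset

/-- A flow network: a finite vertex set `V`, a finite edge set `E` partitioned into
input edges `Ein`, output edges `Eout` and internal edges `Eint`; each internal edge
has two distinct endpoints `tail e` and `head e` (with at most one internal edge per
`(tail, head)` pair), each input edge has a head only, each output edge a tail only
(values of `tail`/`head` outside their intended domains are irrelevant junk); and a
nonnegative upper-bound capacity `cap`. -/
structure FlowNetwork (V E : Type) [Fintype V] [Fintype E]
    [DecidableEq V] [DecidableEq E] where
  Ein : Finset E
  Eout : Finset E
  Eint : Finset E
  cover : Ein ∪ Eout ∪ Eint = Finset.univ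
  disj_in_out : Disjoint Ein Eout
  disj_in_int : Disjoint Ein Eint
  disj_out_int : Disjoint Eout Eint
  tail : E → V
  head : E → V
  no_self_loop : ∀ e ∈ Eint, tail e ≠ head e
  no_multi : ∀ e ∈ Eint, ∀ e' ∈ Eint, tail e = tail e' → head e = head e' → e = e'
  cap : E → ℝ
  cap_nonneg : ∀ e, 0 ≤ cap e

namespace FlowNetwork

variable {V E : Type} [Fintype V] [Fintype E] [DecidableEq V] [DecidableEq E]

/-- A flow `f : E → ℝ≥0` is feasible if it conserves flow at every vertex and
respects the capacity of every edge. -/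
def Feasible (N : FlowNetwork V E) (f : E → ℝ) : Prop :=
  (∀ e, 0 ≤ f e) ∧ (∀ e, f e ≤ N.cap e) ∧
  ∀ v : V,
    ∑ e ∈ (N.Ein ∪ N.Eint).filter (fun e => N.head e = v), f e =
    ∑ e ∈ (N.Eout ∪ N.Eint).filter (fun e => N.tail e = v), f e

/-- `maxFromTo N A B`: the supremum of `f(A)` over all feasible flows `f` that
vanish on `(Ein \ A) ∪ (Eout \ B)`. -/
noncomputable def maxFromTo (N : FlowNetwork V E) (A B : Finset E) : ℝ :=
  sSup {x : ℝ | ∃ f : E → ℝ, N.Feasible f ∧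
    (∀ e ∈ (N.Ein \ A) ∪ (N.Eout \ B), f e = 0) ∧ x = ∑ e ∈ A, f e}


/-! ### Auxiliary machinery -/


noncomputable def inflow (N : FlowNetwork V E) (f : E → ℝ) (v : V) : ℝ :=
  ∑ e ∈ (N.Ein ∪ N.Eint).filter (fun e => N.head e = v), f e

noncomputable def outflow (N : FlowNetwork V E) (f : E → ℝ) (v : V) : ℝ :=
  ∑ e ∈ (N.Eout ∪ N.Eint).filter (fun e => N.tail e = v), f e

lemma continuous_sum_edges (s : Finset E) :
    Continuous (fun h : E → ℝ => ∑ e ∈ s, h e) :=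
  continuous_finset_sum _ fun e _ => continuous_apply e

variable {N : FlowNetwork V E}

lemma sum_in_eq_sum_out {f : E → ℝ} (hf : ∀ v, N.inflow f v = N.outflow f v) :
    ∑ e ∈ N.Ein, f e = ∑ e ∈ N.Eout, f e := by
  have h1 : ∑ v : V, N.inflow f v = ∑ e ∈ N.Ein ∪ N.Eint, f e :=
    Finset.sum_fiberwise _ _ _
  have h2 : ∑ v : V, N.outflow f v = ∑ e ∈ N.Eout ∪ N.Eint, f e :=
    Finset.sum_fiberwise _ _ _
  have h3 : ∑ v : V, N.inflow f v = ∑ v : V, N.outflow f v :=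
    Finset.sum_congr rfl fun v _ => hf v
  rw [h1, h2, Finset.sum_union N.disj_in_int, Finset.sum_union N.disj_out_int] at h3
  linarith

lemma inflow_ind (a : E) (w : V) :
    N.inflow (fun e => if e = a then (1:ℝ) else 0) w
      = if a ∈ N.Ein ∪ N.Eint ∧ N.head a = w then 1 else 0 := by
  unfold inflow
  rw [Finset.sum_ite_eq']
  simp [Finset.mem_filter]

lemma outflow_ind (a : E) (w : V) :
    N.outflow (fun e => if e = a then (1:ℝ) else 0) w
      = if a ∈ N.Eout ∪ N.Eint ∧ N.tail a = w then 1 else 0 := by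
  unfold outflow
  rw [Finset.sum_ite_eq']
  simp [Finset.mem_filter]

lemma inflow_add3 {r p q t : E → ℝ} (hr : ∀ e, r e = p e + q e + t e) (w : V) :
    N.inflow r w = N.inflow p w + N.inflow q w + N.inflow t w := by
  unfold inflow
  rw [← Finset.sum_add_distrib, ← Finset.sum_add_distrib]
  exact Finset.sum_congr rfl fun e _ => hr e

lemma outflow_add3 {r p q t : E → ℝ} (hr : ∀ e, r e = p e + q e + t e) (w : V) :
    N.outflow r w = N.outflow p w + N.outflow q w + N.outflow t w := by
  unfold outflow
  rw [← Finset.sum_add_distrib, ← Finset.sum_add_distrib]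
  exact Finset.sum_congr rfl fun e _ => hr e

lemma inflow_comb {r p q : E → ℝ} {c : ℝ} (hr : ∀ e, r e = p e + c * q e) (w : V) :
    N.inflow r w = N.inflow p w + c * N.inflow q w := by
  unfold inflow
  rw [Finset.mul_sum, ← Finset.sum_add_distrib]
  exact Finset.sum_congr rfl fun e _ => hr e

lemma outflow_comb {r p q : E → ℝ} {c : ℝ} (hr : ∀ e, r e = p e + c * q e) (w : V) :
    N.outflow r w = N.outflow p w + c * N.outflow q w := by
  unfold outflow
  rw [Finset.mul_sum, ← Finset.sum_add_distrib]
  exact Finset.sum_congr rfl fun e _ => hr e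

def Step (N : FlowNetwork V E) (d : E → ℝ) (u v : V) : Prop :=
  ∃ e ∈ N.Eint, 0 < d e ∧ N.tail e = u ∧ N.head e = v

lemma exists_walk {d : E → ℝ} {u v : V}
    (h : Relation.ReflTransGen (N.Step d) u v) :
    ∃ θ : E → ℝ, (∀ e, 0 ≤ θ e) ∧ (∀ e, θ e ≠ 0 → e ∈ N.Eint ∧ 0 < d e) ∧
      ∀ w, N.inflow θ w - N.outflow θ w =
        (if v = w then (1:ℝ) else 0) - (if u = w then 1 else 0) := by
  induction h with
  | refl =>
      refine ⟨fun _ => 0, fun e => le_refl 0, fun e he => absurd rfl he, fun w => ?_⟩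
      simp [inflow, outflow]
  | @tail b c hab hstep ih =>
      obtain ⟨θ, hθ0, hθs, hθd⟩ := ih
      obtain ⟨e0, he0int, he0d, he0t, he0h⟩ := hstep
      refine ⟨fun e => θ e + (if e = e0 then 1 else 0), ?_, ?_, ?_⟩
      · intro e
        have := hθ0 e
        dsimp only
        split <;> linarith
      · intro e he
        by_cases h : e = e0
        · subst h; exact ⟨he0int, he0d⟩
        · simp only [h, if_false, add_zero] at he
          exact hθs e he
      · intro w
        have hin : N.inflow (fun e => θ e + if e = e0 then (1:ℝ) else 0) w
            = N.inflow θ w + (if N.head e0 = w then 1 else 0) := by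
          unfold inflow
          rw [Finset.sum_add_distrib, Finset.sum_ite_eq']
          congr 1
          simp [Finset.mem_filter, Finset.mem_union, he0int]
        have hout : N.outflow (fun e => θ e + if e = e0 then (1:ℝ) else 0) w
            = N.outflow θ w + (if N.tail e0 = w then 1 else 0) := by
          unfold outflow
          rw [Finset.sum_add_distrib, Finset.sum_ite_eq']
          congr 1
          simp [Finset.mem_filter, Finset.mem_union, he0int]
        rw [hin, hout, he0t, he0h]
        have := hθd w
        linarith

lemma sum_flow_filter (s : Finset E) (φ : E → V) (P : V → Prop) [DecidablePred P]
    (d : E → ℝ) :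
    ∑ v ∈ univ.filter P, ∑ e ∈ s.filter (fun e => φ e = v), d e
      = ∑ e ∈ s.filter (fun e => P (φ e)), d e := by
  rw [Finset.sum_filter (p := P), Finset.sum_filter (p := fun e => P (φ e))]
  rw [← Finset.sum_fiberwise s φ (fun e => if P (φ e) then d e else 0)]
  refine Finset.sum_congr rfl fun v _ => ?_
  by_cases hv : P v
  · rw [if_pos hv]
    refine Finset.sum_congr rfl fun e he => ?_
    rw [if_pos (by rw [(Finset.mem_filter.mp he).2]; exact hv)]
  · rw [if_neg hv]
    refine (Finset.sum_eq_zero fun e he => ?_).symm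
    rw [if_neg (by rw [(Finset.mem_filter.mp he).2]; exact hv)]

lemma exists_escape {d : E → ℝ} (hd : ∀ e, 0 ≤ d e)
    (hcons : ∀ v, N.inflow d v = N.outflow d v)
    {a : E} (ha : a ∈ N.Ein) (hda : 0 < d a) :
    ∃ b ∈ N.Eout, 0 < d b ∧ Relation.ReflTransGen (N.Step d) (N.head a) (N.tail b) := by
  classical
  by_contra hcon
  push_neg at hcon
  set P : V → Prop := fun v => Relation.ReflTransGen (N.Step d) (N.head a) v with hP
  have hmono : ∀ e ∈ N.Eint, P (N.tail e) → 0 < d e → P (N.head e) :=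
    fun e he hpt hde => hpt.tail (show N.Step d _ _ from ⟨e, he, hde, rfl, rfl⟩)
  have heq : ∑ v ∈ univ.filter P, N.inflow d v = ∑ v ∈ univ.filter P, N.outflow d v :=
    Finset.sum_congr rfl fun v _ => hcons v
  unfold inflow outflow at heq
  rw [sum_flow_filter, sum_flow_filter] at heq
  rw [Finset.filter_union, Finset.filter_union,
    Finset.sum_union (Finset.disjoint_filter_filter N.disj_in_int),
    Finset.sum_union (Finset.disjoint_filter_filter N.disj_out_int)] at heq
  have h1 : d a ≤ ∑ e ∈ N.Ein.filter (fun e => P (N.head e)), d e := by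
    refine Finset.single_le_sum (fun e _ => hd e) ?_
    simp only [Finset.mem_filter]
    exact ⟨ha, Relation.ReflTransGen.refl⟩
  have h2 : ∑ e ∈ N.Eout.filter (fun e => P (N.tail e)), d e = 0 := by
    refine Finset.sum_eq_zero fun e he => ?_
    simp only [Finset.mem_filter] at he
    by_contra hne
    exact (hcon e he.1 (lt_of_le_of_ne (hd e) (Ne.symm hne))) he.2
  have h3 : ∑ e ∈ N.Eint.filter (fun e => P (N.tail e)), d e
      ≤ ∑ e ∈ N.Eint.filter (fun e => P (N.head e)), d e := by
    have hsub : ∑ e ∈ N.Eint.filter (fun e => P (N.tail e)), d e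
        = ∑ e ∈ N.Eint.filter (fun e => P (N.tail e) ∧ P (N.head e)), d e := by
      refine (Finset.sum_subset ?_ ?_).symm
      · intro e he
        simp only [Finset.mem_filter] at he ⊢
        exact ⟨he.1, he.2.1⟩
      · intro e he hne
        simp only [Finset.mem_filter] at he hne
        by_contra hdz
        exact hne ⟨he.1, he.2, hmono e he.1 he.2 (lt_of_le_of_ne (hd e) (Ne.symm hdz))⟩
    rw [hsub]
    refine Finset.sum_le_sum_of_subset_of_nonneg ?_ (fun e _ _ => hd e)
    intro e he
    simp only [Finset.mem_filter] at he ⊢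
    exact ⟨he.1, he.2.2⟩
  linarith

lemma maxFromTo_bddAbove (A B : Finset E) :
    BddAbove {x : ℝ | ∃ f : E → ℝ, N.Feasible f ∧
      (∀ e ∈ (N.Ein \ A) ∪ (N.Eout \ B), f e = 0) ∧ x = ∑ e ∈ A, f e} := by
  refine ⟨∑ e, N.cap e, ?_⟩
  rintro x ⟨f, ⟨hf0, hfc, -⟩, -, rfl⟩
  calc ∑ e ∈ A, f e ≤ ∑ e ∈ A, N.cap e := Finset.sum_le_sum fun e _ => hfc e
  _ ≤ ∑ e, N.cap e := Finset.sum_le_sum_of_subset_of_nonneg (Finset.subset_univ _)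
      fun e _ _ => N.cap_nonneg e

lemma sum_le_maxFromTo (A B : Finset E) (hA : A ⊆ N.Ein) (hB : B ⊆ N.Eout)
    {g : E → ℝ} (hg : N.Feasible g) (hout : ∀ e ∈ N.Eout \ B, g e = 0) :
    ∑ e ∈ A, g e ≤ N.maxFromTo A B := by
  classical
  obtain ⟨hg0, hgcap, hgcons⟩ := hg
  set S : Set (E → ℝ) := {h | (∀ e, 0 ≤ h e) ∧ (∀ e, h e ≤ g e) ∧
    (∀ e ∈ N.Ein \ A, h e = 0) ∧ ∀ v, N.inflow h v = N.outflow h v} with hSdef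
  have hclosed : IsClosed S := by
    have hrw : S = {h : E → ℝ | ∀ e, 0 ≤ h e} ∩ ({h | ∀ e, h e ≤ g e} ∩
        ({h | ∀ e ∈ N.Ein \ A, h e = 0} ∩ {h | ∀ v, N.inflow h v = N.outflow h v})) := by
      ext h; simp only [hSdef, Set.mem_setOf_eq, Set.mem_inter_iff, and_assoc]
    rw [hrw]
    refine IsClosed.inter ?_ (IsClosed.inter ?_ (IsClosed.inter ?_ ?_))
    · have : {h : E → ℝ | ∀ e, 0 ≤ h e} = ⋂ e, {h : E → ℝ | 0 ≤ h e} := by ext h; simp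
      rw [this]
      exact isClosed_iInter fun e => isClosed_le continuous_const (continuous_apply e)
    · have : {h : E → ℝ | ∀ e, h e ≤ g e} = ⋂ e, {h : E → ℝ | h e ≤ g e} := by ext h; simp
      rw [this]
      exact isClosed_iInter fun e => isClosed_le (continuous_apply e) continuous_const
    · have : {h : E → ℝ | ∀ e ∈ N.Ein \ A, h e = 0}
          = ⋂ e ∈ N.Ein \ A, {h : E → ℝ | h e = 0} := by ext h; simp
      rw [this]
      exact isClosed_biInter fun e _ => isClosed_eq (continuous_apply e) continuous_const
    · have : {h : E → ℝ | ∀ v, N.inflow h v = N.outflow h v}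
          = ⋂ v, {h : E → ℝ | N.inflow h v = N.outflow h v} := by ext h; simp
      rw [this]
      refine isClosed_iInter fun v => isClosed_eq ?_ ?_
      · exact continuous_sum_edges _
      · exact continuous_sum_edges _
  have hScompact : IsCompact S := by
    refine IsCompact.of_isClosed_subset (isCompact_Icc (a := (0 : E → ℝ)) (b := g))
      hclosed ?_
    intro h hh
    exact ⟨fun e => hh.1 e, fun e => hh.2.1 e⟩
  have hSne : S.Nonempty := by
    refine ⟨fun _ => 0, fun e => le_refl 0, fun e => hg0 e, fun e _ => rfl, fun v => ?_⟩
    unfold inflow outflow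
    simp
  obtain ⟨h, hhS, hmax⟩ := hScompact.exists_isMaxOn hSne (continuous_sum_edges A).continuousOn
  obtain ⟨hh0, hhg, hhA, hhcons⟩ := hhS
  have hmax' : ∀ h' ∈ S, ∑ e ∈ A, h' e ≤ ∑ e ∈ A, h e := fun h' hh' => hmax hh'
  have hAeq : ∑ e ∈ A, h e = ∑ e ∈ A, g e := by
    by_contra hne
    have hlt : ∑ e ∈ A, h e < ∑ e ∈ A, g e :=
      lt_of_le_of_ne (Finset.sum_le_sum fun e _ => hhg e) hne
    obtain ⟨a, haA, halt⟩ := Finset.exists_lt_of_sum_lt hlt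
    set d : E → ℝ := fun e => g e - h e with hddef
    have hd0 : ∀ e, 0 ≤ d e := fun e => sub_nonneg.mpr (hhg e)
    have hdcons : ∀ v, N.inflow d v = N.outflow d v := by
      intro v
      have hgv := hgcons v
      have hhv := hhcons v
      unfold inflow outflow at *
      simp only [hddef, Finset.sum_sub_distrib]
      rw [hgv, hhv]
    have hda : 0 < d a := sub_pos.mpr halt
    obtain ⟨b, hbout, hdb, hreach⟩ := exists_escape hd0 hdcons (hA haA) hda
    obtain ⟨θ, hθ0, hθs, hθd⟩ := exists_walk hreach
    set ψ : E → ℝ := fun e => (if e = a then 1 else 0) + θ e + (if e = b then 1 else 0)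
      with hψdef
    have hψ0 : ∀ e, 0 ≤ ψ e := by
      intro e
      have := hθ0 e
      simp only [hψdef]
      split <;> split <;> linarith
    have haEin : a ∈ N.Ein := hA haA
    have hanotout : a ∉ N.Eout ∪ N.Eint := by
      simp only [Finset.mem_union]
      rintro (h' | h')
      · exact (Finset.disjoint_left.mp N.disj_in_out haEin) h'
      · exact (Finset.disjoint_left.mp N.disj_in_int haEin) h'
    have hbnotin : b ∉ N.Ein ∪ N.Eint := by
      simp only [Finset.mem_union]
      rintro (h' | h')
      · exact (Finset.disjoint_left.mp N.disj_in_out h') hbout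
      · exact (Finset.disjoint_left.mp N.disj_out_int hbout) h'
    have hab : a ≠ b := fun h' => (Finset.disjoint_left.mp N.disj_in_out haEin) (h' ▸ hbout)
    have hθa : θ a = 0 := by
      by_contra h'
      exact (Finset.disjoint_left.mp N.disj_in_int haEin) (hθs a h').1
    have hψa : ψ a = 1 := by simp [hψdef, hθa, hab]
    have hψd : ∀ e, ψ e ≠ 0 → 0 < d e := by
      intro e he
      by_cases h1 : e = a
      · subst h1; exact hda
      by_cases h2 : e = b
      · subst h2; exact hdb
      · simp only [hψdef, h1, h2, if_false, add_zero, zero_add] at he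
        exact (hθs e he).2
    have hψA : ∀ e ∈ N.Ein \ A, ψ e = 0 := by
      intro e he
      simp only [Finset.mem_sdiff] at he
      have h1 : e ≠ a := fun h' => he.2 (h' ▸ haA)
      have h2 : e ≠ b := fun h' => (Finset.disjoint_left.mp N.disj_in_out he.1) (h' ▸ hbout)
      have h3 : θ e = 0 := by
        by_contra h'
        exact (Finset.disjoint_left.mp N.disj_in_int he.1) (hθs e h').1
      simp [hψdef, h1, h2, h3]
    have hψbal : ∀ w, N.inflow ψ w = N.outflow ψ w := by
      intro w
      rw [inflow_add3 (r := ψ) (fun e => rfl) w, outflow_add3 (r := ψ) (fun e => rfl) w,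
        inflow_ind, inflow_ind, outflow_ind, outflow_ind]
      have e1 : (if a ∈ N.Ein ∪ N.Eint ∧ N.head a = w then (1:ℝ) else 0)
          = (if N.head a = w then 1 else 0) := by
        by_cases hw : N.head a = w
        · rw [if_pos ⟨Finset.mem_union_left _ haEin, hw⟩, if_pos hw]
        · rw [if_neg (fun hc => hw hc.2), if_neg hw]
      have e2 : (if b ∈ N.Ein ∪ N.Eint ∧ N.head b = w then (1:ℝ) else 0) = 0 :=
        if_neg (fun hc => hbnotin hc.1)
      have e3 : (if a ∈ N.Eout ∪ N.Eint ∧ N.tail a = w then (1:ℝ) else 0) = 0 :=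
        if_neg (fun hc => hanotout hc.1)
      have e4 : (if b ∈ N.Eout ∪ N.Eint ∧ N.tail b = w then (1:ℝ) else 0)
          = (if N.tail b = w then 1 else 0) := by
        by_cases hw : N.tail b = w
        · rw [if_pos ⟨Finset.mem_union_left _ hbout, hw⟩, if_pos hw]
        · rw [if_neg (fun hc => hw hc.2), if_neg hw]
      rw [e1, e2, e3, e4]
      have := hθd w
      linarith
    classical
    set T : Finset E := univ.filter (fun e => ψ e ≠ 0) with hT
    have haT : a ∈ T := by
      simp only [hT, Finset.mem_filter, Finset.mem_univ, true_and]
      rw [hψa]; norm_num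
    have hTne : T.Nonempty := ⟨a, haT⟩
    have hψTpos : ∀ e ∈ T, 0 < ψ e := by
      intro e he
      simp only [hT, Finset.mem_filter, Finset.mem_univ, true_and] at he
      exact lt_of_le_of_ne (hψ0 e) (Ne.symm he)
    set ε : ℝ := T.inf' hTne (fun e => d e / ψ e) with hε
    have hε0 : 0 < ε := by
      rw [hε, Finset.lt_inf'_iff]
      intro e he
      refine div_pos (hψd e ?_) (hψTpos e he)
      simpa [hT] using he
    have hεψ : ∀ e, ε * ψ e ≤ d e := by
      intro e
      by_cases he : ψ e = 0
      · rw [he, mul_zero]; exact hd0 e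
      · have heT : e ∈ T := by simp [hT, he]
        have hle : ε ≤ d e / ψ e := Finset.inf'_le _ heT
        have hpos : 0 < ψ e := hψTpos e heT
        calc ε * ψ e ≤ (d e / ψ e) * ψ e := mul_le_mul_of_nonneg_right hle (hψ0 e)
        _ = d e := div_mul_cancel₀ _ (ne_of_gt hpos)
    have hh'S : (fun e => h e + ε * ψ e) ∈ S := by
      refine ⟨?_, ?_, ?_, ?_⟩
      · intro e
        have := mul_nonneg hε0.le (hψ0 e)
        have := hh0 e
        dsimp only
        linarith
      · intro e
        have h1 := hεψ e
        simp only [hddef] at h1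
        dsimp only
        linarith
      · intro e he
        dsimp only
        rw [hhA e he, hψA e he, mul_zero, add_zero]
      · intro v
        rw [inflow_comb (r := fun e => h e + ε * ψ e) (fun e => rfl) v,
          outflow_comb (r := fun e => h e + ε * ψ e) (fun e => rfl) v,
          hhcons v, hψbal v]
    have hgain : ∑ e ∈ A, h e < ∑ e ∈ A, (h e + ε * ψ e) := by
      rw [Finset.sum_add_distrib]
      have h2 : ε * ψ a ≤ ∑ e ∈ A, ε * ψ e :=
        Finset.single_le_sum (fun e _ => mul_nonneg hε0.le (hψ0 e)) haA
      rw [hψa, mul_one] at h2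
      linarith
    exact absurd (hmax' _ hh'S) (not_le.mpr hgain)
  have hmem : ∑ e ∈ A, g e ∈ {x : ℝ | ∃ f, N.Feasible f ∧
      (∀ e ∈ (N.Ein \ A) ∪ (N.Eout \ B), f e = 0) ∧ x = ∑ e ∈ A, f e} := by
    refine ⟨h, ⟨hh0, fun e => le_trans (hhg e) (hgcap e), hhcons⟩, ?_, hAeq.symm⟩
    intro e he
    rcases Finset.mem_union.mp he with he' | he'
    · exact hhA e he'
    · have hg0' : g e = 0 := hout e he'
      have := hhg e
      have := hh0 e
      linarith
  exact le_csSup (maxFromTo_bddAbove A B) hmem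

lemma exists_maxFlow (A B : Finset E) :
    ∃ f : E → ℝ, N.Feasible f ∧ (∀ e ∈ (N.Ein \ A) ∪ (N.Eout \ B), f e = 0) ∧
      ∑ e ∈ A, f e = N.maxFromTo A B := by
  classical
  set K : Set (E → ℝ) := {f | N.Feasible f ∧ ∀ e ∈ (N.Ein \ A) ∪ (N.Eout \ B), f e = 0}
    with hK
  have hclosed : IsClosed K := by
    have hrw : K = {f : E → ℝ | ∀ e, 0 ≤ f e} ∩ ({f | ∀ e, f e ≤ N.cap e} ∩
        ({f | ∀ v, N.inflow f v = N.outflow f v} ∩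
          {f | ∀ e ∈ (N.Ein \ A) ∪ (N.Eout \ B), f e = 0})) := by
      ext f
      simp only [hK, Set.mem_setOf_eq, Set.mem_inter_iff, Feasible]
      unfold inflow outflow
      tauto
    rw [hrw]
    refine IsClosed.inter ?_ (IsClosed.inter ?_ (IsClosed.inter ?_ ?_))
    · have : {f : E → ℝ | ∀ e, 0 ≤ f e} = ⋂ e, {f : E → ℝ | 0 ≤ f e} := by ext f; simp
      rw [this]
      exact isClosed_iInter fun e => isClosed_le continuous_const (continuous_apply e)
    · have : {f : E → ℝ | ∀ e, f e ≤ N.cap e} = ⋂ e, {f : E → ℝ | f e ≤ N.cap e} := by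
        ext f; simp
      rw [this]
      exact isClosed_iInter fun e => isClosed_le (continuous_apply e) continuous_const
    · have : {f : E → ℝ | ∀ v, N.inflow f v = N.outflow f v}
          = ⋂ v, {f : E → ℝ | N.inflow f v = N.outflow f v} := by ext f; simp
      rw [this]
      refine isClosed_iInter fun v => isClosed_eq ?_ ?_
      · exact continuous_sum_edges _
      · exact continuous_sum_edges _
    · have : {f : E → ℝ | ∀ e ∈ (N.Ein \ A) ∪ (N.Eout \ B), f e = 0}
          = ⋂ e ∈ (N.Ein \ A) ∪ (N.Eout \ B), {f : E → ℝ | f e = 0} := by ext f; simp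
      rw [this]
      exact isClosed_biInter fun e _ => isClosed_eq (continuous_apply e) continuous_const
  have hKcompact : IsCompact K := by
    refine IsCompact.of_isClosed_subset (isCompact_Icc (a := (0 : E → ℝ)) (b := N.cap))
      hclosed ?_
    intro f hf
    exact ⟨fun e => hf.1.1 e, fun e => hf.1.2.1 e⟩
  have hKne : K.Nonempty := by
    rw [hK]
    exact ⟨fun _ => 0, ⟨fun e => le_refl 0, fun e => N.cap_nonneg e, fun v => by simp⟩,
      fun e _ => rfl⟩
  obtain ⟨f, hfK, hmax⟩ := hKcompact.exists_isMaxOn hKne (continuous_sum_edges A).continuousOn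
  refine ⟨f, hfK.1, hfK.2, ?_⟩
  have hgt : IsGreatest {x : ℝ | ∃ f : E → ℝ, N.Feasible f ∧
      (∀ e ∈ (N.Ein \ A) ∪ (N.Eout \ B), f e = 0) ∧ x = ∑ e ∈ A, f e} (∑ e ∈ A, f e) := by
    constructor
    · exact ⟨f, hfK.1, hfK.2, rfl⟩
    · rintro x ⟨f', hf1, hf2, rfl⟩
      exact hmax (show f' ∈ K by rw [hK]; exact ⟨hf1, hf2⟩)
  exact hgt.csSup_eq.symm


/-- the two suprema defining `maxFromToAft N (A1,B | A2,B)` agree: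
the sup of `f(A1)` equals the sup of `f(B)` over all pairs `(f, f')` of nonnegative
functions with `f + f'` feasible, `f'(A2) = f'(B) = maxFromTo N A2 B`, and `f + f'`
vanishing on `(Ein \ (A1 ∪ A2)) ∪ (Eout \ B)`. -/
theorem stmt3 (N : FlowNetwork V E) (A1 A2 B : Finset E)
    (hA1 : A1 ⊆ N.Ein) (hA2 : A2 ⊆ N.Ein) (hdisj : Disjoint A1 A2)
    (hB : B ⊆ N.Eout) :
    sSup {x : ℝ | ∃ f f' : E → ℝ, (∀ e, 0 ≤ f e) ∧ (∀ e, 0 ≤ f' e) ∧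
        N.Feasible (f + f') ∧
        ∑ e ∈ A2, f' e = N.maxFromTo A2 B ∧ ∑ e ∈ B, f' e = N.maxFromTo A2 B ∧
        (∀ e ∈ (N.Ein \ (A1 ∪ A2)) ∪ (N.Eout \ B), f e + f' e = 0) ∧
        x = ∑ e ∈ A1, f e} =
    sSup {x : ℝ | ∃ f f' : E → ℝ, (∀ e, 0 ≤ f e) ∧ (∀ e, 0 ≤ f' e) ∧
        N.Feasible (f + f') ∧
        ∑ e ∈ A2, f' e = N.maxFromTo A2 B ∧ ∑ e ∈ B, f' e = N.maxFromTo A2 B ∧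
        (∀ e ∈ (N.Ein \ (A1 ∪ A2)) ∪ (N.Eout \ B), f e + f' e = 0) ∧
        x = ∑ e ∈ B, f e} := by
  classical
  set S1 := {x : ℝ | ∃ f f' : E → ℝ, (∀ e, 0 ≤ f e) ∧ (∀ e, 0 ≤ f' e) ∧
      N.Feasible (f + f') ∧
      ∑ e ∈ A2, f' e = N.maxFromTo A2 B ∧ ∑ e ∈ B, f' e = N.maxFromTo A2 B ∧
      (∀ e ∈ (N.Ein \ (A1 ∪ A2)) ∪ (N.Eout \ B), f e + f' e = 0) ∧
      x = ∑ e ∈ A1, f e} with hS1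
  set S2 := {x : ℝ | ∃ f f' : E → ℝ, (∀ e, 0 ≤ f e) ∧ (∀ e, 0 ≤ f' e) ∧
      N.Feasible (f + f') ∧
      ∑ e ∈ A2, f' e = N.maxFromTo A2 B ∧ ∑ e ∈ B, f' e = N.maxFromTo A2 B ∧
      (∀ e ∈ (N.Ein \ (A1 ∪ A2)) ∪ (N.Eout \ B), f e + f' e = 0) ∧
      x = ∑ e ∈ B, f e} with hS2
  -- the key transformation
  have key : ∀ f f' : E → ℝ, (∀ e, 0 ≤ f e) → (∀ e, 0 ≤ f' e) → N.Feasible (f + f') →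
      ∑ e ∈ A2, f' e = N.maxFromTo A2 B → ∑ e ∈ B, f' e = N.maxFromTo A2 B →
      (∀ e ∈ (N.Ein \ (A1 ∪ A2)) ∪ (N.Eout \ B), f e + f' e = 0) →
      ∃ h h' : E → ℝ, (∀ e, 0 ≤ h e) ∧ (∀ e, 0 ≤ h' e) ∧ N.Feasible (h + h') ∧
        ∑ e ∈ A2, h' e = N.maxFromTo A2 B ∧ ∑ e ∈ B, h' e = N.maxFromTo A2 B ∧
        (∀ e ∈ (N.Ein \ (A1 ∪ A2)) ∪ (N.Eout \ B), h e + h' e = 0) ∧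
        ∑ e ∈ A1, h e = ∑ e ∈ B, f e ∧ ∑ e ∈ B, h e = ∑ e ∈ B, f e ∧
        ∑ e ∈ A1, f e ≤ ∑ e ∈ A1, h e := by
    intro f f' hf0 hf'0 hF hA2M hBM hvan
    have hQ : ∑ e ∈ N.Ein, (f e + f' e) = ∑ e ∈ N.Eout, (f e + f' e) := by
      have := sum_in_eq_sum_out (f := f + f') hF.2.2
      simpa [Pi.add_apply] using this
    have hEinsplit : ∑ e ∈ N.Ein, (f e + f' e)
        = ∑ e ∈ A1, (f e + f' e) + ∑ e ∈ A2, (f e + f' e) := by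
      rw [← Finset.sum_union hdisj]
      refine (Finset.sum_subset (Finset.union_subset hA1 hA2) fun e he hne => ?_).symm
      exact hvan e (Finset.mem_union_left _ (Finset.mem_sdiff.mpr ⟨he, hne⟩))
    have hEoutsplit : ∑ e ∈ N.Eout, (f e + f' e) = ∑ e ∈ B, (f e + f' e) := by
      refine (Finset.sum_subset hB fun e he hne => ?_).symm
      exact hvan e (Finset.mem_union_right _ (Finset.mem_sdiff.mpr ⟨he, hne⟩))
    have hgA2le : ∑ e ∈ A2, (f e + f' e) ≤ N.maxFromTo A2 B := by
      have := sum_le_maxFromTo (N := N) A2 B hA2 hB hF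
        (fun e he => hvan e (Finset.mem_union_right _ he))
      simpa [Pi.add_apply] using this
    have hgA2 : ∑ e ∈ A2, (f e + f' e) = N.maxFromTo A2 B := by
      refine le_antisymm hgA2le ?_
      rw [← hA2M]
      exact Finset.sum_le_sum fun e _ => by linarith [hf0 e]
    have hBsplit : ∑ e ∈ B, (f e + f' e) = ∑ e ∈ B, f e + ∑ e ∈ B, f' e :=
      Finset.sum_add_distrib
    refine ⟨fun e => if e ∈ A1 then f e + f' e else f e,
      fun e => if e ∈ A1 then 0 else f' e, ?_, ?_, ?_, ?_, ?_, ?_, ?_, ?_, ?_⟩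
    · intro e
      dsimp only
      split
      · linarith [hf0 e, hf'0 e]
      · exact hf0 e
    · intro e
      dsimp only
      split
      · exact le_refl 0
      · exact hf'0 e
    · have hsum : (fun e => if e ∈ A1 then f e + f' e else f e)
          + (fun e => if e ∈ A1 then (0:ℝ) else f' e) = f + f' := by
        funext e
        simp only [Pi.add_apply]
        by_cases he : e ∈ A1 <;> simp [he]
      rw [hsum]
      exact hF
    · rw [← hA2M]
      refine Finset.sum_congr rfl fun e he => ?_
      dsimp only
      rw [if_neg (Finset.disjoint_right.mp hdisj he)]
    · rw [← hBM]
      refine Finset.sum_congr rfl fun e he => ?_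
      dsimp only
      rw [if_neg (fun h' => (Finset.disjoint_left.mp N.disj_in_out (hA1 h')) (hB he))]
    · intro e he
      by_cases h1 : e ∈ A1 <;> simp only [h1, if_true, if_false, add_zero]
      · exact hvan e he
      · exact hvan e he
    · -- ∑ A1 h = ∑ B f
      have h1 : ∑ e ∈ A1, (fun e => if e ∈ A1 then f e + f' e else f e) e
          = ∑ e ∈ A1, (f e + f' e) :=
        Finset.sum_congr rfl fun e he => by dsimp only; rw [if_pos he]
      rw [h1]
      linarith [hQ, hEinsplit, hEoutsplit, hgA2, hBsplit, hBM]
    · refine Finset.sum_congr rfl fun e he => ?_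
      dsimp only
      rw [if_neg (fun h' => (Finset.disjoint_left.mp N.disj_in_out (hA1 h')) (hB he))]
    · refine Finset.sum_le_sum fun e he => ?_
      rw [if_pos he]
      linarith [hf'0 e]
  -- nonemptiness via an optimal flow
  obtain ⟨fs, hfsF, hfsvan, hfsval⟩ := exists_maxFlow (N := N) A2 B
  have hfsB : ∑ e ∈ B, fs e = N.maxFromTo A2 B := by
    have h1 : ∑ e ∈ N.Ein, fs e = ∑ e ∈ N.Eout, fs e := sum_in_eq_sum_out hfsF.2.2
    have h2 : ∑ e ∈ N.Ein, fs e = ∑ e ∈ A2, fs e := by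
      refine (Finset.sum_subset hA2 fun e he hne => ?_).symm
      exact hfsvan e (Finset.mem_union_left _ (Finset.mem_sdiff.mpr ⟨he, hne⟩))
    have h3 : ∑ e ∈ N.Eout, fs e = ∑ e ∈ B, fs e := by
      refine (Finset.sum_subset hB fun e he hne => ?_).symm
      exact hfsvan e (Finset.mem_union_right _ (Finset.mem_sdiff.mpr ⟨he, hne⟩))
    rw [← h3, ← h1, h2, hfsval]
  have hzero_pair : ∀ C : Finset E, (0:ℝ) = ∑ e ∈ C, (0:ℝ) := by simp
  have hpair : (∀ e, (0:ℝ) ≤ (fun _ : E => (0:ℝ)) e) ∧ (∀ e, 0 ≤ fs e) ∧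
      N.Feasible ((fun _ : E => (0:ℝ)) + fs) ∧
      ∑ e ∈ A2, fs e = N.maxFromTo A2 B ∧ ∑ e ∈ B, fs e = N.maxFromTo A2 B ∧
      (∀ e ∈ (N.Ein \ (A1 ∪ A2)) ∪ (N.Eout \ B), (fun _ : E => (0:ℝ)) e + fs e = 0) := by
    refine ⟨fun e => le_refl 0, hfsF.1, ?_, hfsval, hfsB, ?_⟩
    · have : (fun _ : E => (0:ℝ)) + fs = fs := by funext e; simp
      rw [this]
      exact hfsF
    · intro e he
      simp only [zero_add]
      rcases Finset.mem_union.mp he with he' | he'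
      · refine hfsvan e (Finset.mem_union_left _ ?_)
        rcases Finset.mem_sdiff.mp he' with ⟨h1, h2⟩
        exact Finset.mem_sdiff.mpr ⟨h1, fun h3 => h2 (Finset.mem_union_right _ h3)⟩
      · exact hfsvan e (Finset.mem_union_right _ he')
    
  have h01 : (0:ℝ) ∈ S1 := by
    rw [hS1]
    refine ⟨fun _ => 0, fs, hpair.1, hpair.2.1, hpair.2.2.1, hpair.2.2.2.1,
      hpair.2.2.2.2.1, hpair.2.2.2.2.2, by simp⟩
  have h02 : (0:ℝ) ∈ S2 := by
    rw [hS2]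
    refine ⟨fun _ => 0, fs, hpair.1, hpair.2.1, hpair.2.2.1, hpair.2.2.2.1,
      hpair.2.2.2.2.1, hpair.2.2.2.2.2, by simp⟩
  have hbdd : ∀ (C : Finset E),
      BddAbove {x : ℝ | ∃ f f' : E → ℝ, (∀ e, 0 ≤ f e) ∧ (∀ e, 0 ≤ f' e) ∧
        N.Feasible (f + f') ∧
        ∑ e ∈ A2, f' e = N.maxFromTo A2 B ∧ ∑ e ∈ B, f' e = N.maxFromTo A2 B ∧
        (∀ e ∈ (N.Ein \ (A1 ∪ A2)) ∪ (N.Eout \ B), f e + f' e = 0) ∧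
        x = ∑ e ∈ C, f e} := by
    intro C
    refine ⟨∑ e, N.cap e, ?_⟩
    rintro x ⟨f, f', hf0, hf'0, hF, -, -, -, rfl⟩
    have hstep : ∑ e ∈ C, f e ≤ ∑ e ∈ C, N.cap e := by
      refine Finset.sum_le_sum fun e _ => ?_
      have h1 := hF.2.1 e
      simp only [Pi.add_apply] at h1
      linarith [hf'0 e]
    refine le_trans hstep (Finset.sum_le_sum_of_subset_of_nonneg (Finset.subset_univ _)
      fun e _ _ => N.cap_nonneg e)
  have hbdd1 : BddAbove S1 := hbdd A1
  have hbdd2 : BddAbove S2 := hbdd B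
  apply le_antisymm
  · refine csSup_le ⟨0, h01⟩ ?_
    rintro x ⟨f, f', hf0, hf'0, hF, hA2M, hBM, hvan, rfl⟩
    obtain ⟨h, h', c1, c2, c3, c4, c5, c6, c7, c8, c9⟩ := key f f' hf0 hf'0 hF hA2M hBM hvan
    have hmem2 : ∑ e ∈ B, h e ∈ S2 := by
      rw [hS2]; exact ⟨h, h', c1, c2, c3, c4, c5, c6, rfl⟩
    have hle : ∑ e ∈ A1, f e ≤ ∑ e ∈ B, h e := by linarith
    exact le_trans hle (le_csSup hbdd2 hmem2)
  · refine csSup_le ⟨0, h02⟩ ?_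
    rintro x ⟨f, f', hf0, hf'0, hF, hA2M, hBM, hvan, rfl⟩
    obtain ⟨h, h', c1, c2, c3, c4, c5, c6, c7, c8, c9⟩ := key f f' hf0 hf'0 hF hA2M hBM hvan
    have hmem1 : ∑ e ∈ A1, h e ∈ S1 := by
      rw [hS1]; exact ⟨h, h', c1, c2, c3, c4, c5, c6, rfl⟩
    rw [← c7]
    exact le_csSup hbdd1 hmem1


end FlowNetwork
end

section
/- Let N = (G, c) be a flow network, A ⊆ Ein, and B1, B2 ⊆ Eout with B1 ∩ B2 = ∅. Consider all pairs of functions f, f′ : E → ℝ≥0 such that f + f′ is a feasible flow, f′(A) = f′(B2) = maxFromTo_N(A, B2), and (f + f′)(e) = 0 for every e ∈ (Ein \ A) ∪ (Eout \ (B1 ∪ B2)). Then the supremum of f(B1) over all such pairs equals the supremum of f(A) over all such pairs; that is, definitions (5) and (6) of maxFromToAft_N(A, B1 | A, B2) agree. -/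
open Finset

set_option linter.unusedSectionVars false
set_option maxHeartbeats 1000000

namespace FlowNetwork

variable {V E : Type} [Fintype V] [Fintype E] [DecidableEq V] [DecidableEq E]

/-- Conservation alone (no capacity constraint). -/
def Conserv (N : FlowNetwork V E) (g : E → ℝ) : Prop :=
  ∀ v : V,
    ∑ e ∈ (N.Ein ∪ N.Eint).filter (fun e => N.head e = v), g e =
    ∑ e ∈ (N.Eout ∪ N.Eint).filter (fun e => N.tail e = v), g e

lemma sum_filter_mem_aux (s : Finset E) (R : Finset V) (φ : E → V) (g : E → ℝ) :
    ∑ v ∈ R, ∑ e ∈ s.filter (fun e => φ e = v), g e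
      = ∑ e ∈ s.filter (fun e => φ e ∈ R), g e := by
  rw [← Finset.sum_fiberwise_of_maps_to (t := R) (g := φ)
      (fun e he => (Finset.mem_filter.mp he).2) g]
  refine Finset.sum_congr rfl fun v hv => ?_
  refine Finset.sum_congr ?_ fun _ _ => rfl
  rw [Finset.filter_filter]
  ext e
  simp only [Finset.mem_filter]
  constructor
  · rintro ⟨he, hφ⟩; exact ⟨he, hφ ▸ hv, hφ⟩
  · rintro ⟨he, _, hφ⟩; exact ⟨he, hφ⟩

/-- Global conservation: total inflow equals total outflow. -/
lemma conserv_total (N : FlowNetwork V E) {g : E → ℝ} (hc : N.Conserv g) :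
    ∑ e ∈ N.Ein, g e = ∑ e ∈ N.Eout, g e := by
  have h1 : ∑ v : V, ∑ e ∈ (N.Ein ∪ N.Eint).filter (fun e => N.head e = v), g e
      = ∑ e ∈ N.Ein ∪ N.Eint, g e := Finset.sum_fiberwise _ _ _
  have h2 : ∑ v : V, ∑ e ∈ (N.Eout ∪ N.Eint).filter (fun e => N.tail e = v), g e
      = ∑ e ∈ N.Eout ∪ N.Eint, g e := Finset.sum_fiberwise _ _ _
  have h3 : ∑ e ∈ N.Ein ∪ N.Eint, g e = ∑ e ∈ N.Eout ∪ N.Eint, g e := by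
    rw [← h1, ← h2]; exact Finset.sum_congr rfl fun v _ => hc v
  rw [Finset.sum_union N.disj_in_int, Finset.sum_union N.disj_out_int] at h3
  linarith

/-- Build a "unit path flow" along a positive chain of internal edges. -/
lemma chain_delta (N : FlowNetwork V E) (g : E → ℝ) (v₀ : V) (u : V)
    (h : Relation.ReflTransGen
      (fun a b => ∃ e ∈ N.Eint, 0 < g e ∧ N.tail e = a ∧ N.head e = b) u v₀) :
    ∃ δ : E → ℝ, (∀ e, 0 ≤ δ e) ∧ (∀ e, 0 < δ e → 0 < g e ∧ e ∈ N.Eint) ∧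
      ∀ w, (∑ e ∈ N.Eint.filter (fun e => N.head e = w), δ e) + (if u = w then 1 else 0)
         = (∑ e ∈ N.Eint.filter (fun e => N.tail e = w), δ e) + (if v₀ = w then 1 else 0) := by
  induction h using Relation.ReflTransGen.head_induction_on with
  | refl =>
    exact ⟨0, fun e => le_refl _, fun e he => absurd he (by simp), fun w => by simp⟩
  | head hr _ ih =>
    obtain ⟨e, heint, hge, hte, hhe⟩ := hr
    obtain ⟨δ, hδ0, hδs, hδc⟩ := ih
    refine ⟨fun x => δ x + if x = e then 1 else 0, ?_, ?_, ?_⟩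
    · intro x
      have := hδ0 x
      dsimp only
      split_ifs <;> linarith
    · intro x hx
      dsimp only at hx
      by_cases hxe : x = e
      · exact hxe ▸ ⟨hge, heint⟩
      · rw [if_neg hxe, add_zero] at hx
        exact hδs x hx
    · intro w
      have key := hδc w
      have hs1 : ∀ (s : Finset E), ∑ x ∈ s, (δ x + if x = e then 1 else 0)
          = (∑ x ∈ s, δ x) + (if e ∈ s then 1 else 0) := by
        intro s
        rw [Finset.sum_add_distrib, Finset.sum_ite_eq' s e (fun _ => (1:ℝ))]
      rw [hs1, hs1]
      have hmemH : (e ∈ N.Eint.filter (fun e' => N.head e' = w)) = (N.head e = w) := by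
        simp [Finset.mem_filter, heint]
      have hmemT : (e ∈ N.Eint.filter (fun e' => N.tail e' = w)) = (N.tail e = w) := by
        simp [Finset.mem_filter, heint]
      simp only [Finset.mem_filter, heint, true_and, hte, hhe]
      split_ifs at key ⊢ <;> linarith
/-- Find a positive input edge that reaches `tail o` through positive internal edges. -/
lemma cut_find_input (N : FlowNetwork V E) (g : E → ℝ) (hg0 : ∀ e, 0 ≤ g e)
    (hc : N.Conserv g) (o : E) (ho : o ∈ N.Eout) (hgo : 0 < g o) :
    ∃ i ∈ N.Ein, 0 < g i ∧ Relation.ReflTransGen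
      (fun a b => ∃ e ∈ N.Eint, 0 < g e ∧ N.tail e = a ∧ N.head e = b)
      (N.head i) (N.tail o) := by
  classical
  set r : V → V → Prop := fun a b => ∃ e ∈ N.Eint, 0 < g e ∧ N.tail e = a ∧ N.head e = b with hr
  set R : Finset V := Finset.univ.filter (fun v => Relation.ReflTransGen r v (N.tail o)) with hR
  have hmemR : ∀ v, v ∈ R ↔ Relation.ReflTransGen r v (N.tail o) := by
    intro v; simp [hR]
  -- sum of conservation over R
  have hsum : ∑ e ∈ (N.Ein ∪ N.Eint).filter (fun e => N.head e ∈ R), g e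
      = ∑ e ∈ (N.Eout ∪ N.Eint).filter (fun e => N.tail e ∈ R), g e := by
    rw [← sum_filter_mem_aux, ← sum_filter_mem_aux]
    exact Finset.sum_congr rfl fun v _ => hc v
  rw [Finset.filter_union, Finset.filter_union,
    Finset.sum_union (Finset.disjoint_filter_filter N.disj_in_int),
    Finset.sum_union (Finset.disjoint_filter_filter N.disj_out_int)] at hsum
  -- internal inflow ≤ internal outflow
  have hint : ∑ e ∈ N.Eint.filter (fun e => N.head e ∈ R), g e
      ≤ ∑ e ∈ N.Eint.filter (fun e => N.tail e ∈ R), g e := by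
    have hsub : ∑ e ∈ N.Eint.filter (fun e => N.head e ∈ R), g e
        = ∑ e ∈ N.Eint.filter (fun e => N.head e ∈ R ∧ N.tail e ∈ R), g e := by
      refine (Finset.sum_subset ?_ ?_).symm
      · intro e he
        obtain ⟨h1, h2, _⟩ := Finset.mem_filter.mp he
        exact Finset.mem_filter.mpr ⟨h1, h2⟩
      · intro e he hne
        by_contra hgz
        have hge : 0 < g e := lt_of_le_of_ne (hg0 e) (Ne.symm hgz)
        obtain ⟨heint, hhead⟩ := Finset.mem_filter.mp he
        have htail : N.tail e ∈ R := by
          rw [hmemR]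
          exact Relation.ReflTransGen.head ⟨e, heint, hge, rfl, rfl⟩ ((hmemR _).mp hhead)
        exact hne (Finset.mem_filter.mpr ⟨heint, hhead, htail⟩)
    rw [hsub]
    refine Finset.sum_le_sum_of_subset_of_nonneg ?_ (fun e _ _ => hg0 e)
    intro e he
    obtain ⟨h1, _, h3⟩ := Finset.mem_filter.mp he
    exact Finset.mem_filter.mpr ⟨h1, h3⟩
  have hoR : o ∈ N.Eout.filter (fun e => N.tail e ∈ R) := by
    refine Finset.mem_filter.mpr ⟨ho, ?_⟩
    rw [hmemR]
  have hout : g o ≤ ∑ e ∈ N.Eout.filter (fun e => N.tail e ∈ R), g e :=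
    Finset.single_le_sum (fun e _ => hg0 e) hoR
  have hin : 0 < ∑ e ∈ N.Ein.filter (fun e => N.head e ∈ R), g e := by linarith
  by_contra hno
  push_neg at hno
  have hzero : ∑ e ∈ N.Ein.filter (fun e => N.head e ∈ R), g e = 0 := by
    refine Finset.sum_eq_zero fun e he => ?_
    obtain ⟨hein, hhead⟩ := Finset.mem_filter.mp he
    by_contra hgz
    exact absurd ((hmemR _).mp hhead)
      (hno e hein (lt_of_le_of_ne (hg0 e) (Ne.symm hgz)))
  linarith
/-- One reduction step: strictly shrink the support, keeping conservation and all
output values except at `o`. -/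
lemma reduce_step (N : FlowNetwork V E) (g : E → ℝ) (hg0 : ∀ e, 0 ≤ g e)
    (hc : N.Conserv g) (o : E) (ho : o ∈ N.Eout) (hgo : 0 < g o) :
    ∃ g' : E → ℝ, (∀ e, 0 ≤ g' e) ∧ (∀ e, g' e ≤ g e) ∧ N.Conserv g' ∧
      (∀ e ∈ N.Eout, e ≠ o → g' e = g e) ∧
      Finset.univ.filter (fun e => g' e ≠ 0) ⊂ Finset.univ.filter (fun e => g e ≠ 0) := by
  classical
  obtain ⟨i, hiEin, hgi, hreach⟩ := N.cut_find_input g hg0 hc o ho hgo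
  obtain ⟨δc, hδc0, hδcs, hδcc⟩ := N.chain_delta g (N.tail o) (N.head i) hreach
  have hio : i ≠ o := fun h => (Finset.disjoint_left.mp N.disj_in_out) hiEin (h ▸ ho)
  have hδcz : ∀ x, x ∉ N.Eint → δc x = 0 := by
    intro x hx
    by_contra hne
    exact hx (hδcs x (lt_of_le_of_ne (hδc0 x) (Ne.symm hne))).2
  set δ : E → ℝ := fun x => δc x + (if x = i then 1 else 0) + (if x = o then 1 else 0)
    with hδdef
  have hδ0 : ∀ x, 0 ≤ δ x := by
    intro x
    have := hδc0 x
    simp only [hδdef]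
    split_ifs <;> linarith
  have hδs : ∀ x, 0 < δ x → 0 < g x := by
    intro x hx
    by_cases h1 : x = i
    · exact h1 ▸ hgi
    by_cases h2 : x = o
    · exact h2 ▸ hgo
    simp only [hδdef, if_neg h1, if_neg h2, add_zero] at hx
    exact (hδcs x hx).1
  have hδo : (1:ℝ) ≤ δ o := by
    have h := hδc0 o
    have h2 : δ o = δc o + 1 := by simp [hδdef, Ne.symm hio]
    linarith
  -- sum of δ over a finset
  have hsumδ : ∀ (s : Finset E), ∑ x ∈ s, δ x
      = (∑ x ∈ s, δc x) + (if i ∈ s then 1 else 0) + (if o ∈ s then 1 else 0) := by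
    intro s
    simp only [hδdef]
    rw [Finset.sum_add_distrib, Finset.sum_add_distrib,
      Finset.sum_ite_eq' s i (fun _ => (1:ℝ)), Finset.sum_ite_eq' s o (fun _ => (1:ℝ))]
  -- conservation of δ
  have hδcons : N.Conserv δ := by
    intro w
    rw [Finset.filter_union, Finset.filter_union,
      Finset.sum_union (Finset.disjoint_filter_filter N.disj_in_int),
      Finset.sum_union (Finset.disjoint_filter_filter N.disj_out_int),
      hsumδ, hsumδ, hsumδ, hsumδ]
    have key := hδcc w
    -- zero chain sums outside Eint
    have hzin : ∑ x ∈ N.Ein.filter (fun e => N.head e = w), δc x = 0 :=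
      Finset.sum_eq_zero fun x hx => hδcz x fun hint =>
        (Finset.disjoint_left.mp N.disj_in_int) (Finset.mem_filter.mp hx).1 hint
    have hzout : ∑ x ∈ N.Eout.filter (fun e => N.tail e = w), δc x = 0 :=
      Finset.sum_eq_zero fun x hx => hδcz x fun hint =>
        (Finset.disjoint_left.mp N.disj_out_int) (Finset.mem_filter.mp hx).1 hint
    have hinotint : i ∉ N.Eint := Finset.disjoint_left.mp N.disj_in_int hiEin
    have honotint : o ∉ N.Eint := Finset.disjoint_left.mp N.disj_out_int ho
    have honotin : o ∉ N.Ein := fun h => (Finset.disjoint_left.mp N.disj_in_out) h ho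
    have hinotout : i ∉ N.Eout := Finset.disjoint_left.mp N.disj_in_out hiEin
    simp only [Finset.mem_filter, hiEin, honotint, hinotint, honotin, hinotout, ho,
      false_and, if_false, true_and, hzin, hzout]
    split_ifs at key ⊢ <;> linarith
  -- δ vanishes on Eout except o
  have hδout : ∀ e ∈ N.Eout, e ≠ o → δ e = 0 := by
    intro e he hne
    have h1 : δc e = 0 := hδcz e (Finset.disjoint_left.mp N.disj_out_int he)
    have h2 : e ≠ i := fun h => (Finset.disjoint_left.mp N.disj_in_out) (h ▸ hiEin) he
    simp [hδdef, h1, h2, hne]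
  -- the support of δ
  set T : Finset E := Finset.univ.filter (fun e => 0 < δ e) with hT
  have hoT : o ∈ T := by simp [hT]; linarith
  have hTne : T.Nonempty := ⟨o, hoT⟩
  set ε : ℝ := T.inf' hTne (fun e => g e / δ e) with hε
  have hδpos : ∀ e ∈ T, 0 < δ e := fun e he => (Finset.mem_filter.mp he).2
  have hεpos : 0 < ε := by
    rw [hε, Finset.lt_inf'_iff]
    intro e he
    exact div_pos (hδs e (hδpos e he)) (hδpos e he)
  have hεle : ∀ e ∈ T, ε * δ e ≤ g e := by
    intro e he
    have h1 : ε ≤ g e / δ e := Finset.inf'_le _ he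
    calc ε * δ e ≤ (g e / δ e) * δ e := by
          exact mul_le_mul_of_nonneg_right h1 (le_of_lt (hδpos e he))
      _ = g e := div_mul_cancel₀ _ (ne_of_gt (hδpos e he))
  have hδzero : ∀ e, e ∉ T → δ e = 0 := by
    intro e he
    have : ¬ 0 < δ e := by simpa [hT] using he
    linarith [hδ0 e]
  refine ⟨fun e => g e - ε * δ e, ?_, ?_, ?_, ?_, ?_⟩
  · intro e
    dsimp only
    by_cases he : e ∈ T
    · have := hεle e he; linarith
    · rw [hδzero e he]; simpa using hg0 e
  · intro e
    dsimp only
    have h1 : 0 ≤ ε * δ e := mul_nonneg (le_of_lt hεpos) (hδ0 e)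
    linarith
  · intro w
    have h1 := hc w
    have h2 := hδcons w
    rw [Finset.sum_sub_distrib, Finset.sum_sub_distrib, ← Finset.mul_sum, ← Finset.mul_sum]
    rw [h2] at *
    linarith [h1]
  · intro e he hne
    dsimp only
    rw [hδout e he hne, mul_zero, sub_zero]
  · obtain ⟨estar, hestarT, hestareq⟩ := Finset.exists_mem_eq_inf' hTne (fun e => g e / δ e)
    have hδe : δ estar ≠ 0 := ne_of_gt (hδpos estar hestarT)
    have hge : 0 < g estar := hδs estar (hδpos estar hestarT)
    have hzero : g estar - ε * δ estar = 0 := by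
      have hεeq : ε = g estar / δ estar := hε.trans hestareq
      rw [hεeq, div_mul_cancel₀ _ hδe]
      ring
    rw [Finset.ssubset_iff_of_subset]
    · exact ⟨estar, by simp [ne_of_gt hge], by simp [hzero]⟩
    · intro e he
      simp only [Finset.mem_filter, Finset.mem_univ, true_and] at he ⊢
      intro hgz
      have hδz : δ e = 0 := by
        by_contra hδnz
        exact (lt_irrefl (0:ℝ)) (hgz ▸ hδs e (lt_of_le_of_ne (hδ0 e) (Ne.symm hδnz)))
      exact he (by rw [hgz, hδz, mul_zero, sub_zero])
/-- Subflow extraction: keep the values on `B ⊆ Eout`, kill all other outputs. -/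
lemma subflow (N : FlowNetwork V E) (B : Finset E) (hB : B ⊆ N.Eout) :
    ∀ (n : ℕ) (g : E → ℝ), (∀ e, 0 ≤ g e) → N.Conserv g →
      (Finset.univ.filter (fun e => g e ≠ 0)).card ≤ n →
      ∃ h : E → ℝ, (∀ e, 0 ≤ h e) ∧ (∀ e, h e ≤ g e) ∧ N.Conserv h ∧
        (∀ e ∈ B, h e = g e) ∧ (∀ e ∈ N.Eout, e ∉ B → h e = 0) := by
  intro n
  induction n with
  | zero =>
    intro g hg0 hc hcard
    have hz : ∀ e, g e = 0 := by
      intro e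
      by_contra hne
      have : e ∈ Finset.univ.filter (fun e => g e ≠ 0) := by simp [hne]
      have := Finset.card_pos.mpr ⟨e, this⟩
      omega
    exact ⟨g, hg0, fun e => le_refl _, hc, fun e _ => rfl, fun e _ _ => hz e⟩
  | succ n ih =>
    intro g hg0 hc hcard
    by_cases hall : ∀ e ∈ N.Eout, e ∉ B → g e = 0
    · exact ⟨g, hg0, fun e => le_refl _, hc, fun e _ => rfl, hall⟩
    · push_neg at hall
      obtain ⟨o, hoEout, hoB, hne⟩ := hall
      have hgo : 0 < g o := lt_of_le_of_ne (hg0 o) (Ne.symm hne)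
      obtain ⟨g', hg'0, hg'le, hg'c, hg'out, hss⟩ := N.reduce_step g hg0 hc o hoEout hgo
      have hcard' : (Finset.univ.filter (fun e => g' e ≠ 0)).card ≤ n := by
        have := Finset.card_lt_card hss
        omega
      obtain ⟨h, hh0, hhle, hhc, hhB, hhout⟩ := ih g' hg'0 hg'c hcard'
      refine ⟨h, hh0, fun e => le_trans (hhle e) (hg'le e), hhc, ?_, hhout⟩
      intro e heB
      rw [hhB e heB, hg'out e (hB heB) (fun h => hoB (h ▸ heB))]

/-- The defining set of `maxFromTo` is bounded above. -/
lemma bdd_maxFromTo (N : FlowNetwork V E) (A B : Finset E) :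
    BddAbove {x : ℝ | ∃ f : E → ℝ, N.Feasible f ∧
      (∀ e ∈ (N.Ein \ A) ∪ (N.Eout \ B), f e = 0) ∧ x = ∑ e ∈ A, f e} := by
  refine ⟨∑ e, N.cap e, ?_⟩
  rintro x ⟨f, ⟨hf0, hfcap, _⟩, _, rfl⟩
  calc ∑ e ∈ A, f e ≤ ∑ e ∈ A, N.cap e := Finset.sum_le_sum fun e _ => hfcap e
    _ ≤ ∑ e, N.cap e :=
      Finset.sum_le_sum_of_subset_of_nonneg (Finset.subset_univ _)
        (fun e _ _ => N.cap_nonneg e)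

/-- Key lemma: any feasible flow vanishing on `Ein \ A` sends at most
`maxFromTo A B` into `B`. -/
lemma flow_out_le_max (N : FlowNetwork V E) (g : E → ℝ) (hfeas : N.Feasible g)
    (A B : Finset E) (hA : A ⊆ N.Ein) (hB : B ⊆ N.Eout)
    (hvan : ∀ e ∈ N.Ein \ A, g e = 0) :
    ∑ e ∈ B, g e ≤ N.maxFromTo A B := by
  obtain ⟨hg0, hgcap, hgc⟩ := hfeas
  obtain ⟨h, hh0, hhle, hhc, hhB, hhout⟩ :=
    N.subflow B hB (Finset.univ.filter (fun e => g e ≠ 0)).card g hg0 hgc (le_refl _)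
  have hhvanIn : ∀ e ∈ N.Ein \ A, h e = 0 := fun e he =>
    le_antisymm (hvan e he ▸ hhle e) (hh0 e)
  have hsumB : ∑ e ∈ B, g e = ∑ e ∈ B, h e :=
    (Finset.sum_congr rfl fun e he => (hhB e he).symm)
  have h1 : ∑ e ∈ A, h e = ∑ e ∈ N.Ein, h e := by
    rw [← Finset.sum_sdiff hA, Finset.sum_eq_zero hhvanIn, zero_add]
  have h2 : ∑ e ∈ N.Eout, h e = ∑ e ∈ B, h e := by
    rw [← Finset.sum_sdiff hB, Finset.sum_eq_zero
      (fun e he => hhout e (Finset.mem_sdiff.mp he).1 (Finset.mem_sdiff.mp he).2), zero_add]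
  have hmem : ∑ e ∈ A, h e ∈ {x : ℝ | ∃ f : E → ℝ, N.Feasible f ∧
      (∀ e ∈ (N.Ein \ A) ∪ (N.Eout \ B), f e = 0) ∧ x = ∑ e ∈ A, f e} := by
    refine ⟨h, ⟨hh0, fun e => le_trans (hhle e) (hgcap e), hhc⟩, ?_, rfl⟩
    intro e he
    rcases Finset.mem_union.mp he with he' | he'
    · exact hhvanIn e he'
    · exact hhout e (Finset.mem_sdiff.mp he').1 (Finset.mem_sdiff.mp he').2
  have hle := le_csSup (N.bdd_maxFromTo A B) hmem
  have htot := N.conserv_total hhc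
  have : ∑ e ∈ B, g e = ∑ e ∈ A, h e := by linarith
  rw [this]
  exact hle

/-- Any admissible pair sends `f(A)` fully into `B1`:
`f(B2) = 0` and `f(A) = (f+f')(B1)`. -/
lemma key_identity (N : FlowNetwork V E) (A B1 B2 : Finset E)
    (hA : A ⊆ N.Ein) (hB1 : B1 ⊆ N.Eout) (hB2 : B2 ⊆ N.Eout)
    (hdisj : Disjoint B1 B2)
    (f f' : E → ℝ) (hf0 : ∀ e, 0 ≤ f e) (hf'0 : ∀ e, 0 ≤ f' e)
    (hfeas : N.Feasible (f + f'))
    (hA' : ∑ e ∈ A, f' e = N.maxFromTo A B2)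
    (hB2' : ∑ e ∈ B2, f' e = N.maxFromTo A B2)
    (hvan : ∀ e ∈ (N.Ein \ A) ∪ (N.Eout \ (B1 ∪ B2)), f e + f' e = 0) :
    ∑ e ∈ A, f e = ∑ e ∈ B1, (f e + f' e) := by
  have hvanIn : ∀ e ∈ N.Ein \ A, f e + f' e = 0 :=
    fun e he => hvan e (Finset.mem_union_left _ he)
  have hvanOut : ∀ e ∈ N.Eout \ (B1 ∪ B2), f e + f' e = 0 :=
    fun e he => hvan e (Finset.mem_union_right _ he)
  have hle : ∑ e ∈ B2, (f e + f' e) ≤ N.maxFromTo A B2 := by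
    have := N.flow_out_le_max (f + f') hfeas A B2 hA hB2 (fun e he => hvanIn e he)
    simpa using this
  have hsplit : ∑ e ∈ B2, (f e + f' e) = (∑ e ∈ B2, f e) + ∑ e ∈ B2, f' e :=
    Finset.sum_add_distrib
  have hfB2nn : 0 ≤ ∑ e ∈ B2, f e := Finset.sum_nonneg fun e _ => hf0 e
  have hfB2 : ∑ e ∈ B2, f e = 0 := by
    rw [hsplit, hB2'] at hle
    linarith
  have htot : ∑ e ∈ N.Ein, (f e + f' e) = ∑ e ∈ N.Eout, (f e + f' e) := by
    have := N.conserv_total (g := f + f') hfeas.2.2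
    simpa using this
  have hEin : ∑ e ∈ N.Ein, (f e + f' e) = ∑ e ∈ A, (f e + f' e) := by
    rw [← Finset.sum_sdiff hA, Finset.sum_eq_zero hvanIn, zero_add]
  have hsubU : B1 ∪ B2 ⊆ N.Eout := Finset.union_subset hB1 hB2
  have hEout : ∑ e ∈ N.Eout, (f e + f' e)
      = (∑ e ∈ B1, (f e + f' e)) + ∑ e ∈ B2, (f e + f' e) := by
    rw [← Finset.sum_sdiff hsubU, Finset.sum_eq_zero hvanOut, zero_add,
      Finset.sum_union hdisj]
  have h1 : ∑ e ∈ A, (f e + f' e) = (∑ e ∈ A, f e) + N.maxFromTo A B2 := by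
    rw [Finset.sum_add_distrib, hA']
  have h2 : ∑ e ∈ B2, (f e + f' e) = N.maxFromTo A B2 := by
    rw [hsplit, hfB2, hB2', zero_add]
  linarith

/-- the two suprema defining `maxFromToAft N (A,B1 | A,B2)` agree:
the sup of `f(B1)` equals the sup of `f(A)` over all pairs `(f, f')` of nonnegative
functions with `f + f'` feasible, `f'(A) = f'(B2) = maxFromTo N A B2`, and `f + f'`
vanishing on `(Ein \ A) ∪ (Eout \ (B1 ∪ B2))`. -/
theorem stmt4 (N : FlowNetwork V E) (A B1 B2 : Finset E)
    (hA : A ⊆ N.Ein) (hB1 : B1 ⊆ N.Eout) (hB2 : B2 ⊆ N.Eout)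
    (hdisj : Disjoint B1 B2) :
    sSup {x : ℝ | ∃ f f' : E → ℝ, (∀ e, 0 ≤ f e) ∧ (∀ e, 0 ≤ f' e) ∧
        N.Feasible (f + f') ∧
        ∑ e ∈ A, f' e = N.maxFromTo A B2 ∧ ∑ e ∈ B2, f' e = N.maxFromTo A B2 ∧
        (∀ e ∈ (N.Ein \ A) ∪ (N.Eout \ (B1 ∪ B2)), f e + f' e = 0) ∧
        x = ∑ e ∈ B1, f e} =
    sSup {x : ℝ | ∃ f f' : E → ℝ, (∀ e, 0 ≤ f e) ∧ (∀ e, 0 ≤ f' e) ∧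
        N.Feasible (f + f') ∧
        ∑ e ∈ A, f' e = N.maxFromTo A B2 ∧ ∑ e ∈ B2, f' e = N.maxFromTo A B2 ∧
        (∀ e ∈ (N.Ein \ A) ∪ (N.Eout \ (B1 ∪ B2)), f e + f' e = 0) ∧
        x = ∑ e ∈ A, f e} := by
  classical
  set S1 : Set ℝ := {x : ℝ | ∃ f f' : E → ℝ, (∀ e, 0 ≤ f e) ∧ (∀ e, 0 ≤ f' e) ∧
        N.Feasible (f + f') ∧
        ∑ e ∈ A, f' e = N.maxFromTo A B2 ∧ ∑ e ∈ B2, f' e = N.maxFromTo A B2 ∧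
        (∀ e ∈ (N.Ein \ A) ∪ (N.Eout \ (B1 ∪ B2)), f e + f' e = 0) ∧
        x = ∑ e ∈ B1, f e} with hS1def
  set S2 : Set ℝ := {x : ℝ | ∃ f f' : E → ℝ, (∀ e, 0 ≤ f e) ∧ (∀ e, 0 ≤ f' e) ∧
        N.Feasible (f + f') ∧
        ∑ e ∈ A, f' e = N.maxFromTo A B2 ∧ ∑ e ∈ B2, f' e = N.maxFromTo A B2 ∧
        (∀ e ∈ (N.Ein \ A) ∪ (N.Eout \ (B1 ∪ B2)), f e + f' e = 0) ∧
        x = ∑ e ∈ A, f e} with hS2def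
  -- boundedness
  have hbdd : ∀ (C : Finset E), BddAbove {x : ℝ | ∃ f f' : E → ℝ,
      (∀ e, 0 ≤ f e) ∧ (∀ e, 0 ≤ f' e) ∧ N.Feasible (f + f') ∧
      ∑ e ∈ A, f' e = N.maxFromTo A B2 ∧ ∑ e ∈ B2, f' e = N.maxFromTo A B2 ∧
      (∀ e ∈ (N.Ein \ A) ∪ (N.Eout \ (B1 ∪ B2)), f e + f' e = 0) ∧
      x = ∑ e ∈ C, f e} := by
    intro C
    refine ⟨∑ e, N.cap e, ?_⟩
    rintro x ⟨f, f', hf0, hf'0, hfeas, _, _, _, rfl⟩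
    calc ∑ e ∈ C, f e ≤ ∑ e ∈ C, N.cap e := by
          refine Finset.sum_le_sum fun e _ => ?_
          have h1 := hfeas.2.1 e
          have h2 := hf'0 e
          simp only [Pi.add_apply] at h1
          linarith
      _ ≤ ∑ e, N.cap e :=
          Finset.sum_le_sum_of_subset_of_nonneg (Finset.subset_univ _)
            (fun e _ _ => N.cap_nonneg e)
  have hbdd1 : BddAbove S1 := hbdd B1
  have hbdd2 : BddAbove S2 := hbdd A
  -- S2 ⊆ S1
  have hsub : S2 ⊆ S1 := by
    rintro x ⟨f, f', hf0, hf'0, hfeas, hA', hB2', hvan, rfl⟩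
    have key := N.key_identity A B1 B2 hA hB1 hB2 hdisj f f' hf0 hf'0 hfeas hA' hB2' hvan
    refine ⟨fun e => if e ∈ B1 then f e + f' e else f e,
      fun e => if e ∈ B1 then 0 else f' e, ?_, ?_, ?_, ?_, ?_, ?_, ?_⟩
    · intro e; dsimp only
      split_ifs
      · exact add_nonneg (hf0 e) (hf'0 e)
      · exact hf0 e
    · intro e; dsimp only
      split_ifs
      · exact le_refl _
      · exact hf'0 e
    · have heq : ((fun e => if e ∈ B1 then f e + f' e else f e)
          + fun e => if e ∈ B1 then 0 else f' e) = f + f' := by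
        funext e
        simp only [Pi.add_apply]
        split_ifs <;> ring
      rw [heq]; exact hfeas
    · rw [Finset.sum_congr rfl (fun e he => if_neg
        (fun hB1e => (Finset.disjoint_left.mp N.disj_in_out) (hA he) (hB1 hB1e)))]
      exact hA'
    · rw [Finset.sum_congr rfl (fun e he => if_neg
        (fun hB1e => (Finset.disjoint_left.mp hdisj) hB1e he))]
      exact hB2'
    · intro e he
      dsimp only
      split_ifs
      · rw [add_zero]; exact hvan e he
      · exact hvan e he
    · rw [Finset.sum_congr rfl (fun e he => if_pos he)]
      exact key
  -- every element of S1 is dominated by an element of S2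
  have hdom : ∀ x ∈ S1, ∃ y ∈ S2, x ≤ y := by
    rintro x ⟨f, f', hf0, hf'0, hfeas, hA', hB2', hvan, rfl⟩
    have key := N.key_identity A B1 B2 hA hB1 hB2 hdisj f f' hf0 hf'0 hfeas hA' hB2' hvan
    refine ⟨∑ e ∈ A, f e, ⟨f, f', hf0, hf'0, hfeas, hA', hB2', hvan, rfl⟩, ?_⟩
    rw [key]
    exact Finset.sum_le_sum fun e _ => by linarith [hf'0 e]
  rcases Set.eq_empty_or_nonempty S1 with h1 | h1
  · have h2 : S2 = ∅ := Set.eq_empty_of_subset_empty (h1 ▸ hsub)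
    rw [h1, h2]
  · apply le_antisymm
    · refine csSup_le h1 fun x hx => ?_
      obtain ⟨y, hy, hxy⟩ := hdom x hx
      exact hxy.trans (le_csSup hbdd2 hy)
    · obtain ⟨x0, hx0⟩ := h1
      obtain ⟨y0, hy0, _⟩ := hdom x0 hx0
      exact csSup_le_csSup hbdd1 ⟨y0, hy0⟩ hsub

end FlowNetwork
end

section
/- Let N = (G, c) be a flow network. For all A1, A2 ⊆ Ein with A1 ∩ A2 = ∅ and all B ⊆ Eout: maxFromToAft_N(A1, B | A2, B) = maxFromTo_N(A1 ∪ A2, B) − maxFromTo_N(A2, B). -/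
set_option linter.unusedSectionVars false
open Finset

section Helpers

variable {V E : Type} [Fintype V] [Fintype E] [DecidableEq V] [DecidableEq E]

/-- Sum over vertices in `R` of sums over edges with endpoint `= v` equals sum over
edges with endpoint in `R`. -/
lemma sum_fiber_sum (s : Finset E) (h : E → V) (R : Finset V) (f : E → ℝ) :
    ∑ v ∈ R, ∑ e ∈ s.filter (fun e => h e = v), f e
      = ∑ e ∈ s.filter (fun e => h e ∈ R), f e := by
  rw [Finset.sum_filter]
  simp only [Finset.sum_filter]
  rw [Finset.sum_comm]
  refine Finset.sum_congr rfl fun e _ => ?_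
  by_cases hmem : h e ∈ R
  · rw [if_pos hmem, Finset.sum_eq_single_of_mem (h e) hmem]
    · simp
    · intro v _ hv; simp [Ne.symm hv]
  · rw [if_neg hmem, Finset.sum_eq_zero]
    intro v hv
    rw [if_neg]
    rintro rfl; exact hmem hv

lemma sum_filter_split (s : Finset E) (p q : E → Prop) [DecidablePred p] [DecidablePred q]
    (f : E → ℝ) :
    ∑ e ∈ s.filter p, f e
      = ∑ e ∈ s.filter (fun e => p e ∧ q e), f e
        + ∑ e ∈ s.filter (fun e => p e ∧ ¬ q e), f e := by
  rw [← Finset.sum_filter_add_sum_filter_not (s.filter p) q, Finset.filter_filter,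
    Finset.filter_filter]

lemma sum_update_single (s : Finset E) (g : E → ℝ) (e' : E) (δ : ℝ) :
    ∑ e ∈ s, (g e + if e = e' then δ else 0)
      = (∑ e ∈ s, g e) + (if e' ∈ s then δ else 0) := by
  rw [Finset.sum_add_distrib, Finset.sum_ite_eq' s e' (fun _ => δ)]

end Helpers

namespace FlowNetwork

variable {V E : Type} [Fintype V] [Fintype E] [DecidableEq V] [DecidableEq E]

/-- `maxFromToAftIn N A1 B A2` = `maxFromToAft N (A1, B | A2, B)`: the supremum of
`f(A1)` over all pairs `(f, f')` of nonnegative functions with `f + f'` feasible,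
`f'(A2) = f'(B) = maxFromTo N A2 B`, and `f + f'` vanishing on
`(Ein \ (A1 ∪ A2)) ∪ (Eout \ B)`. -/
noncomputable def maxFromToAftIn (N : FlowNetwork V E) (A1 B A2 : Finset E) : ℝ :=
  sSup {x : ℝ | ∃ f f' : E → ℝ, (∀ e, 0 ≤ f e) ∧ (∀ e, 0 ≤ f' e) ∧
    N.Feasible (f + f') ∧
    ∑ e ∈ A2, f' e = N.maxFromTo A2 B ∧ ∑ e ∈ B, f' e = N.maxFromTo A2 B ∧
    (∀ e ∈ (N.Ein \ (A1 ∪ A2)) ∪ (N.Eout \ B), f e + f' e = 0) ∧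
    x = ∑ e ∈ A1, f e}


section Core

variable {V E : Type} [Fintype V] [Fintype E] [DecidableEq V] [DecidableEq E]
variable (N : FlowNetwork V E)

/-- Flow conservation at a vertex. -/
def ConsAt (f : E → ℝ) (v : V) : Prop :=
  ∑ e ∈ (N.Ein ∪ N.Eint).filter (fun e => N.head e = v), f e =
  ∑ e ∈ (N.Eout ∪ N.Eint).filter (fun e => N.tail e = v), f e

/-- A flow with respect to an arbitrary capacity function `c`. -/
def IsFlow (c : E → ℝ) (f : E → ℝ) : Prop :=
  (∀ e, 0 ≤ f e) ∧ (∀ e, f e ≤ c e) ∧ ∀ v, N.ConsAt f v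

/-- Restricted capacity: zero outside sources `S` and sinks `B`. -/
noncomputable def rcap (S B : Finset E) : E → ℝ :=
  fun e => if e ∈ (N.Ein \ S) ∪ (N.Eout \ B) then 0 else N.cap e

lemma rcap_nonneg (S B : Finset E) (e : E) : 0 ≤ N.rcap S B e := by
  unfold rcap; split <;> simp [N.cap_nonneg e, le_refl]

lemma rcap_le_cap (S B : Finset E) (e : E) : N.rcap S B e ≤ N.cap e := by
  unfold rcap; split <;> simp [N.cap_nonneg e, le_refl]

lemma isFlow_iff (S B : Finset E) (f : E → ℝ) :
    N.IsFlow (N.rcap S B) f ↔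
      (N.Feasible f ∧ ∀ e ∈ (N.Ein \ S) ∪ (N.Eout \ B), f e = 0) := by
  constructor
  · rintro ⟨h0, hc, hv⟩
    have hz : ∀ e ∈ (N.Ein \ S) ∪ (N.Eout \ B), f e = 0 := by
      intro e he
      have := hc e
      rw [rcap, if_pos he] at this
      exact le_antisymm this (h0 e)
    exact ⟨⟨h0, fun e => (hc e).trans (N.rcap_le_cap S B e), hv⟩, hz⟩
  · rintro ⟨⟨h0, hc, hv⟩, hz⟩
    refine ⟨h0, fun e => ?_, hv⟩
    rw [rcap]
    split
    · next h => exact le_of_eq (hz e h)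
    · exact hc e

/-- The general cut identity for any "conservative" function. -/
lemma cut_identity (D : E → ℝ) (hD : ∀ v, N.ConsAt D v) (R : Finset V) :
    ∑ e ∈ N.Ein.filter (fun e => N.head e ∈ R), D e
      + ∑ e ∈ N.Eint.filter (fun e => N.head e ∈ R ∧ N.tail e ∉ R), D e
    = ∑ e ∈ N.Eout.filter (fun e => N.tail e ∈ R), D e
      + ∑ e ∈ N.Eint.filter (fun e => N.tail e ∈ R ∧ N.head e ∉ R), D e := by
  have hsum : ∑ v ∈ R, ∑ e ∈ (N.Ein ∪ N.Eint).filter (fun e => N.head e = v), D e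
      = ∑ v ∈ R, ∑ e ∈ (N.Eout ∪ N.Eint).filter (fun e => N.tail e = v), D e :=
    Finset.sum_congr rfl fun v _ => hD v
  rw [sum_fiber_sum, sum_fiber_sum] at hsum
  rw [Finset.filter_union, Finset.filter_union] at hsum
  rw [Finset.sum_union, Finset.sum_union] at hsum
  · -- split the Eint sums
    have h1 := sum_filter_split N.Eint (fun e => N.head e ∈ R) (fun e => N.tail e ∈ R) D
    have h2 := sum_filter_split N.Eint (fun e => N.tail e ∈ R) (fun e => N.head e ∈ R) D
    have hcomm : (N.Eint.filter fun e => N.head e ∈ R ∧ N.tail e ∈ R)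
        = (N.Eint.filter fun e => N.tail e ∈ R ∧ N.head e ∈ R) := by
      apply Finset.filter_congr; intro e _; constructor <;> exact fun h => ⟨h.2, h.1⟩
    rw [h1, h2, hcomm] at hsum
    linarith [hsum]
  · exact Finset.disjoint_filter_filter N.disj_out_int
  · exact Finset.disjoint_filter_filter N.disj_in_int

/-- Total inflow equals total outflow for a conservative function. -/
lemma val_in_eq_out (D : E → ℝ) (hD : ∀ v, N.ConsAt D v) :
    ∑ e ∈ N.Ein, D e = ∑ e ∈ N.Eout, D e := by
  have := N.cut_identity D hD Finset.univ
  simp only [Finset.mem_univ, not_true, and_false, Finset.filter_false,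
    Finset.sum_empty, Finset.filter_true, add_zero] at this
  simpa using this

end Core

section Augment

variable {V E : Type} [Fintype V] [Fintype E] [DecidableEq V] [DecidableEq E]
variable (N : FlowNetwork V E)

/-- The residual-graph step relation w.r.t. capacity `c` and flow `f`. -/
def Res (c f : E → ℝ) (u w : V) : Prop :=
  (∃ e ∈ N.Eint, N.tail e = u ∧ N.head e = w ∧ f e < c e) ∨
  (∃ e ∈ N.Eint, N.tail e = w ∧ N.head e = u ∧ 0 < f e)

/-- Single-edge modification. -/
def gadd (g : E → ℝ) (e' : E) (t : ℝ) : E → ℝ := fun x => g x + if x = e' then t else 0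

lemma gadd_self (g : E → ℝ) (e' : E) (t : ℝ) : gadd g e' t e' = g e' + t := by
  simp [gadd]

lemma gadd_ne (g : E → ℝ) (e' : E) (t : ℝ) {x : E} (h : x ≠ e') : gadd g e' t x = g x := by
  simp [gadd, h]

lemma sum_gadd (s : Finset E) (g : E → ℝ) (e' : E) (t : ℝ) :
    ∑ e ∈ s, gadd g e' t e = (∑ e ∈ s, g e) + (if e' ∈ s then t else 0) :=
  sum_update_single s g e' t

lemma notmem_filter_in (e₀ : E) (w : V) (hw : N.head e₀ ≠ w) :
    e₀ ∉ (N.Ein ∪ N.Eint).filter (fun e => N.head e = w) := by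
  intro hmem
  exact hw (Finset.mem_filter.mp hmem).2

lemma notmem_filter_out_of_in (e₀ : E) (he₀ : e₀ ∈ N.Ein) (w : V) :
    e₀ ∉ (N.Eout ∪ N.Eint).filter (fun e => N.tail e = w) := by
  intro hmem
  rcases Finset.mem_union.mp (Finset.mem_filter.mp hmem).1 with h | h
  · exact Finset.disjoint_left.mp N.disj_in_out he₀ h
  · exact Finset.disjoint_left.mp N.disj_in_int he₀ h

lemma notmem_filter_head (e : E) (w : V) (hw : N.head e ≠ w) :
    e ∉ (N.Ein ∪ N.Eint).filter (fun x => N.head x = w) := fun hmem =>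
  hw (Finset.mem_filter.mp hmem).2

lemma notmem_filter_tail (e : E) (w : V) (hw : N.tail e ≠ w) :
    e ∉ (N.Eout ∪ N.Eint).filter (fun x => N.tail x = w) := fun hmem =>
  hw (Finset.mem_filter.mp hmem).2

/-- Key augmentation invariant, proved along residual reachability. -/
lemma augment_reach (c f : E → ℝ) (hf : N.IsFlow c f) (e₀ : E) (he₀ : e₀ ∈ N.Ein)
    (hcap : f e₀ < c e₀) {v : V}
    (hv : Relation.ReflTransGen (N.Res c f) (N.head e₀) v) :
    ∃ δ₀ : ℝ, 0 < δ₀ ∧ ∃ K : ℝ, 0 < K ∧ ∀ δ : ℝ, 0 < δ → δ ≤ δ₀ → ∃ g : E → ℝ,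
      (∀ e, 0 ≤ g e) ∧ (∀ e, g e ≤ c e) ∧
      (∀ e ∈ N.Ein, e ≠ e₀ → g e = f e) ∧ (∀ e ∈ N.Eout, g e = f e) ∧
      g e₀ = f e₀ + δ ∧ (∀ e, |g e - f e| ≤ K * δ) ∧
      (∀ w, w ≠ v → N.ConsAt g w) ∧
      (∑ e ∈ (N.Ein ∪ N.Eint).filter (fun e => N.head e = v), g e =
       (∑ e ∈ (N.Eout ∪ N.Eint).filter (fun e => N.tail e = v), g e) + δ) := by
  obtain ⟨hf0, hfc, hfv⟩ := hf
  induction hv with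
  | refl =>
    refine ⟨c e₀ - f e₀, by linarith, 1, one_pos, fun δ hδ hδ0 => ?_⟩
    refine ⟨gadd f e₀ δ, ?_, ?_, ?_, ?_, gadd_self f e₀ δ, ?_, ?_, ?_⟩
    · intro e
      by_cases h : e = e₀
      · subst h; rw [gadd_self]; have := hf0 e; linarith
      · rw [gadd_ne _ _ _ h]; exact hf0 e
    · intro e
      by_cases h : e = e₀
      · subst h; rw [gadd_self]; linarith
      · rw [gadd_ne _ _ _ h]; exact hfc e
    · intro e _ hne; exact gadd_ne _ _ _ hne
    · intro e he
      refine gadd_ne _ _ _ ?_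
      rintro rfl
      exact Finset.disjoint_left.mp N.disj_in_out he₀ he
    · intro e
      by_cases h : e = e₀
      · subst h; rw [gadd_self, one_mul]
        have h2 : f e + δ - f e = δ := by ring
        rw [h2, abs_of_pos hδ]
      · rw [gadd_ne _ _ _ h, sub_self, abs_zero, one_mul]; linarith
    · intro w hw
      unfold ConsAt
      rw [sum_gadd, sum_gadd]
      rw [if_neg (N.notmem_filter_in e₀ w (fun h => hw (h ▸ rfl)))]
      rw [if_neg (N.notmem_filter_out_of_in e₀ he₀ w), add_zero, add_zero]
      exact hfv w
    · rw [sum_gadd, sum_gadd]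
      have h1 : e₀ ∈ (N.Ein ∪ N.Eint).filter (fun e => N.head e = N.head e₀) :=
        Finset.mem_filter.mpr ⟨Finset.mem_union_left _ he₀, rfl⟩
      rw [if_pos h1, if_neg (N.notmem_filter_out_of_in e₀ he₀ (N.head e₀)), add_zero]
      rw [hfv (N.head e₀)]
  | tail hreach hstep ih =>
    rename_i u w
    obtain ⟨δ₀, hδ₀, K, hK, hfam⟩ := ih
    rcases hstep with ⟨e, heint, hte, hhe, hece⟩ | ⟨e, heint, hte, hhe, hepos⟩
    · -- forward residual edge from u to w
      refine ⟨min δ₀ ((c e - f e) / (K + 1)), lt_min hδ₀ (div_pos (by linarith) (by linarith)),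
        K + 1, by linarith, fun δ hδ hδle => ?_⟩
      have hδle1 : δ ≤ δ₀ := le_trans hδle (min_le_left _ _)
      have hδle2 : δ ≤ (c e - f e) / (K + 1) := le_trans hδle (min_le_right _ _)
      have hδ2 : (K + 1) * δ ≤ c e - f e := by
        have := (le_div_iff₀ (by linarith : (0:ℝ) < K + 1)).mp hδle2
        linarith
      obtain ⟨g, hg0, hgc, hgin, hgout, hge₀, hgbd, hgcons, hgexc⟩ := hfam δ hδ hδle1
      have hune : u ≠ w := by rw [← hte, ← hhe]; exact N.no_self_loop e heint
      have henotin : e ∉ N.Ein := Finset.disjoint_right.mp N.disj_in_int heint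
      have henotout : e ∉ N.Eout := Finset.disjoint_right.mp N.disj_out_int heint
      refine ⟨gadd g e δ, ?_, ?_, ?_, ?_, ?_, ?_, ?_, ?_⟩
      · intro x
        by_cases h : x = e
        · subst h; rw [gadd_self]; have := hg0 x; linarith
        · rw [gadd_ne _ _ _ h]; exact hg0 x
      · intro x
        by_cases h : x = e
        · subst h; rw [gadd_self]
          have hb := abs_le.mp (hgbd x)
          have h2 : g x ≤ f x + K * δ := by linarith [hb.2]
          linarith
        · rw [gadd_ne _ _ _ h]; exact hgc x
      · intro x hx hne
        rw [gadd_ne _ _ _ (by rintro rfl; exact henotin hx)]; exact hgin x hx hne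
      · intro x hx
        rw [gadd_ne _ _ _ (by rintro rfl; exact henotout hx)]; exact hgout x hx
      · rw [gadd_ne _ _ _ (by rintro rfl; exact henotin he₀)]; exact hge₀
      · intro x
        by_cases h : x = e
        · subst h; rw [gadd_self]
          have hb := abs_le.mp (hgbd x)
          rw [abs_le]; constructor <;> nlinarith [hb.1, hb.2]
        · rw [gadd_ne _ _ _ h]
          have hb := abs_le.mp (hgbd x)
          rw [abs_le]; constructor <;> nlinarith [hb.1, hb.2]
      · intro w' hw'
        unfold ConsAt
        rw [sum_gadd, sum_gadd]
        by_cases hu : w' = u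
        · subst hu
          have h2 : e ∈ (N.Eout ∪ N.Eint).filter (fun x => N.tail x = w') :=
            Finset.mem_filter.mpr ⟨Finset.mem_union_right _ heint, hte⟩
          rw [if_neg (N.notmem_filter_head e w' (by rw [hhe]; exact fun h => hw' h.symm))]
          rw [if_pos h2, add_zero]
          linarith [hgexc]
        · rw [if_neg (N.notmem_filter_head e w' (by rw [hhe]; exact fun h => hw' h.symm))]
          rw [if_neg (N.notmem_filter_tail e w' (by rw [hte]; exact fun h => hu h.symm))]
          rw [add_zero, add_zero]
          exact hgcons w' hu
      · rw [sum_gadd, sum_gadd]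
        have h1 : e ∈ (N.Ein ∪ N.Eint).filter (fun x => N.head x = w) :=
          Finset.mem_filter.mpr ⟨Finset.mem_union_right _ heint, hhe⟩
        rw [if_pos h1, if_neg (N.notmem_filter_tail e w (by rw [hte]; exact hune)), add_zero]
        have hcw := hgcons w (Ne.symm hune)
        unfold ConsAt at hcw
        linarith [hcw]
    · -- backward residual edge: e goes from w to u, we decrease it
      refine ⟨min δ₀ (f e / (K + 1)), lt_min hδ₀ (div_pos hepos (by linarith)),
        K + 1, by linarith, fun δ hδ hδle => ?_⟩
      have hδle1 : δ ≤ δ₀ := le_trans hδle (min_le_left _ _)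
      have hδle2 : δ ≤ f e / (K + 1) := le_trans hδle (min_le_right _ _)
      have hδ2 : (K + 1) * δ ≤ f e := by
        have := (le_div_iff₀ (by linarith : (0:ℝ) < K + 1)).mp hδle2
        linarith
      obtain ⟨g, hg0, hgc, hgin, hgout, hge₀, hgbd, hgcons, hgexc⟩ := hfam δ hδ hδle1
      have hune : u ≠ w := by rw [← hte, ← hhe]; exact (N.no_self_loop e heint).symm
      have henotin : e ∉ N.Ein := Finset.disjoint_right.mp N.disj_in_int heint
      have henotout : e ∉ N.Eout := Finset.disjoint_right.mp N.disj_out_int heint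
      refine ⟨gadd g e (-δ), ?_, ?_, ?_, ?_, ?_, ?_, ?_, ?_⟩
      · intro x
        by_cases h : x = e
        · subst h; rw [gadd_self]
          have hb := abs_le.mp (hgbd x)
          nlinarith [hb.1]
        · rw [gadd_ne _ _ _ h]; exact hg0 x
      · intro x
        by_cases h : x = e
        · subst h; rw [gadd_self]; have := hgc x; linarith
        · rw [gadd_ne _ _ _ h]; exact hgc x
      · intro x hx hne
        rw [gadd_ne _ _ _ (by rintro rfl; exact henotin hx)]; exact hgin x hx hne
      · intro x hx
        rw [gadd_ne _ _ _ (by rintro rfl; exact henotout hx)]; exact hgout x hx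
      · rw [gadd_ne _ _ _ (by rintro rfl; exact henotin he₀)]; exact hge₀
      · intro x
        by_cases h : x = e
        · subst h; rw [gadd_self]
          have hb := abs_le.mp (hgbd x)
          rw [abs_le]; constructor <;> nlinarith [hb.1, hb.2]
        · rw [gadd_ne _ _ _ h]
          have hb := abs_le.mp (hgbd x)
          rw [abs_le]; constructor <;> nlinarith [hb.1, hb.2]
      · intro w' hw'
        unfold ConsAt
        rw [sum_gadd, sum_gadd]
        by_cases hu : w' = u
        · subst hu
          have h1 : e ∈ (N.Ein ∪ N.Eint).filter (fun x => N.head x = w') :=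
            Finset.mem_filter.mpr ⟨Finset.mem_union_right _ heint, hhe⟩
          rw [if_pos h1]
          rw [if_neg (N.notmem_filter_tail e w' (by rw [hte]; exact fun h => hw' h.symm))]
          rw [add_zero]
          linarith [hgexc]
        · rw [if_neg (N.notmem_filter_head e w' (by rw [hhe]; exact fun h => hu h.symm))]
          rw [if_neg (N.notmem_filter_tail e w' (by rw [hte]; exact fun h => hw' h.symm))]
          rw [add_zero, add_zero]
          exact hgcons w' hu
      · rw [sum_gadd, sum_gadd]
        have h2 : e ∈ (N.Eout ∪ N.Eint).filter (fun x => N.tail x = w) :=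
          Finset.mem_filter.mpr ⟨Finset.mem_union_right _ heint, hte⟩
        rw [if_neg (N.notmem_filter_head e w (by rw [hhe]; exact fun h => hune h))]
        rw [if_pos h2]
        have hcw := hgcons w (Ne.symm hune)
        unfold ConsAt at hcw
        linarith [hcw]

end Augment

section MaxOrAugment

variable {V E : Type} [Fintype V] [Fintype E] [DecidableEq V] [DecidableEq E]
variable (N : FlowNetwork V E)

lemma notmem_filter_in_of_out (e : E) (he : e ∈ N.Eout) (p : E → Prop) [DecidablePred p] :
    e ∉ (N.Ein ∪ N.Eint).filter p := by
  intro hmem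
  rcases Finset.mem_union.mp (Finset.mem_filter.mp hmem).1 with h | h
  · exact Finset.disjoint_right.mp N.disj_in_out he h
  · exact Finset.disjoint_left.mp N.disj_out_int he h

/-- Full augmentation: given a residual path from an unsaturated source to an
unsaturated sink, produce a strictly better flow, not smaller on input edges. -/
lemma augment_flow (c f : E → ℝ) (hf : N.IsFlow c f) (e₀ : E) (he₀ : e₀ ∈ N.Ein)
    (hc0 : f e₀ < c e₀) (e_b : E) (heb : e_b ∈ N.Eout)
    (hreach : Relation.ReflTransGen (N.Res c f) (N.head e₀) (N.tail e_b))
    (hcb : f e_b < c e_b) :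
    ∃ g, N.IsFlow c g ∧ (∀ e ∈ N.Ein, f e ≤ g e) ∧
      ∑ e ∈ N.Ein, f e < ∑ e ∈ N.Ein, g e := by
  obtain ⟨δ₀, hδ₀, K, hK, hfam⟩ := N.augment_reach c f hf e₀ he₀ hc0 hreach
  set δ := min δ₀ ((c e_b - f e_b) / (K + 1)) with hδdef
  have hδ : 0 < δ := lt_min hδ₀ (div_pos (by linarith) (by linarith))
  have hδle1 : δ ≤ δ₀ := min_le_left _ _
  have hδleb : δ ≤ c e_b - f e_b := by
    have h1 : δ ≤ (c e_b - f e_b) / (K + 1) := min_le_right _ _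
    have h2 : (c e_b - f e_b) / (K + 1) ≤ c e_b - f e_b := by
      apply div_le_self (by linarith) (by linarith)
    linarith
  obtain ⟨g, hg0, hgc, hgin, hgout, hge₀, hgbd, hgcons, hgexc⟩ := hfam δ hδ hδle1
  have hebnotin : e_b ∉ N.Ein := Finset.disjoint_right.mp N.disj_in_out heb
  refine ⟨gadd g e_b δ, ⟨?_, ?_, ?_⟩, ?_, ?_⟩
  · intro x
    by_cases h : x = e_b
    · subst h; rw [gadd_self]; have := hg0 x; linarith
    · rw [gadd_ne _ _ _ h]; exact hg0 x
  · intro x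
    by_cases h : x = e_b
    · subst h; rw [gadd_self, hgout x heb]; linarith
    · rw [gadd_ne _ _ _ h]; exact hgc x
  · intro v
    unfold ConsAt
    rw [sum_gadd, sum_gadd]
    rw [if_neg (N.notmem_filter_in_of_out e_b heb _), add_zero]
    by_cases hv : v = N.tail e_b
    · subst hv
      have h2 : e_b ∈ (N.Eout ∪ N.Eint).filter (fun x => N.tail x = N.tail e_b) :=
        Finset.mem_filter.mpr ⟨Finset.mem_union_left _ heb, rfl⟩
      rw [if_pos h2]
      linarith [hgexc]
    · rw [if_neg (N.notmem_filter_tail e_b v (fun h => hv (h ▸ rfl)))]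
      rw [add_zero]
      exact hgcons v hv
  · intro x hx
    rw [gadd_ne _ _ _ (by rintro rfl; exact hebnotin hx)]
    by_cases h : x = e₀
    · subst h; rw [hge₀]; linarith
    · rw [hgin x hx h]
  · have hsum : ∑ e ∈ N.Ein, gadd g e_b δ e = ∑ e ∈ N.Ein, gadd f e₀ δ e := by
      refine Finset.sum_congr rfl fun x hx => ?_
      rw [gadd_ne _ _ _ (by rintro rfl; exact hebnotin hx)]
      by_cases h : x = e₀
      · subst h; rw [hge₀, gadd_self]
      · rw [hgin x hx h, gadd_ne _ _ _ h]
    rw [hsum, sum_gadd, if_pos he₀]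
    linarith

lemma consAt_sub (f g : E → ℝ) (v : V) (hf : N.ConsAt f v) (hg : N.ConsAt g v) :
    N.ConsAt (fun e => g e - f e) v := by
  unfold ConsAt at *
  rw [Finset.sum_sub_distrib, Finset.sum_sub_distrib, hf, hg]

/-- Either we can strictly improve the flow (weakly increasing it on input edges),
or there is a cut certifying maximality. -/
lemma max_or_augment (c f : E → ℝ) (hf : N.IsFlow c f) :
    (∃ g, N.IsFlow c g ∧ (∀ e ∈ N.Ein, f e ≤ g e) ∧
      ∑ e ∈ N.Ein, f e < ∑ e ∈ N.Ein, g e) ∨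
    (∃ R : Finset V,
      (∀ e ∈ N.Ein, f e < c e → N.head e ∈ R) ∧
      (∀ e ∈ N.Eout, N.tail e ∈ R → f e = c e) ∧
      (∀ e ∈ N.Eint, N.tail e ∈ R → N.head e ∉ R → f e = c e) ∧
      (∀ e ∈ N.Eint, N.head e ∈ R → N.tail e ∉ R → f e = 0)) := by
  classical
  set Rset : Set V := {v | ∃ e₀, e₀ ∈ N.Ein ∧ f e₀ < c e₀ ∧
    Relation.ReflTransGen (N.Res c f) (N.head e₀) v} with hRset
  by_cases hex : ∃ e_b, e_b ∈ N.Eout ∧ N.tail e_b ∈ Rset ∧ f e_b < c e_b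
  · obtain ⟨e_b, heb, ⟨e₀, he₀, hc0, hreach⟩, hcb⟩ := hex
    exact Or.inl (N.augment_flow c f hf e₀ he₀ hc0 e_b heb hreach hcb)
  · push_neg at hex
    refine Or.inr ⟨Finset.univ.filter (fun v => v ∈ Rset), ?_, ?_, ?_, ?_⟩
    · intro e he hlt
      rw [Finset.mem_filter]
      exact ⟨Finset.mem_univ _, ⟨e, he, hlt, Relation.ReflTransGen.refl⟩⟩
    · intro e he hR
      rw [Finset.mem_filter] at hR
      exact le_antisymm (hf.2.1 e) (hex e he hR.2)
    · intro e he hR hnR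
      by_contra hne
      have hlt : f e < c e := lt_of_le_of_ne (hf.2.1 e) hne
      apply hnR
      rw [Finset.mem_filter] at hR ⊢
      obtain ⟨_, e₀, he₀, hc0, hreach⟩ := hR
      exact ⟨Finset.mem_univ _, ⟨e₀, he₀, hc0,
        hreach.tail (Or.inl ⟨e, he, rfl, rfl, hlt⟩)⟩⟩
    · intro e he hR hnR
      by_contra hne
      have hlt : 0 < f e := lt_of_le_of_ne (hf.1 e) (Ne.symm hne)
      apply hnR
      rw [Finset.mem_filter] at hR ⊢
      obtain ⟨_, e₀, he₀, hc0, hreach⟩ := hR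
      exact ⟨Finset.mem_univ _, ⟨e₀, he₀, hc0,
        hreach.tail (Or.inr ⟨e, he, rfl, rfl, hlt⟩)⟩⟩

/-- A cut as above certifies that `f` has maximum value. -/
lemma cut_bound (c f : E → ℝ) (hf : N.IsFlow c f) (R : Finset V)
    (ha : ∀ e ∈ N.Ein, f e < c e → N.head e ∈ R)
    (hb : ∀ e ∈ N.Eout, N.tail e ∈ R → f e = c e)
    (hcc : ∀ e ∈ N.Eint, N.tail e ∈ R → N.head e ∉ R → f e = c e)
    (hd : ∀ e ∈ N.Eint, N.head e ∈ R → N.tail e ∉ R → f e = 0)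
    (g : E → ℝ) (hg : N.IsFlow c g) :
    ∑ e ∈ N.Ein, g e ≤ ∑ e ∈ N.Ein, f e := by
  set D : E → ℝ := fun e => g e - f e with hD
  have hDcons : ∀ v, N.ConsAt D v := fun v => N.consAt_sub f g v (hf.2.2 v) (hg.2.2 v)
  have hcut := N.cut_identity D hDcons R
  have hsplit := Finset.sum_filter_add_sum_filter_not N.Ein (fun e => N.head e ∈ R) D
  have h1 : ∑ e ∈ N.Ein.filter (fun e => N.head e ∉ R), D e ≤ 0 := by
    apply Finset.sum_nonpos
    intro e he
    rw [Finset.mem_filter] at he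
    have hfe : f e = c e := by
      by_contra hne
      exact he.2 (ha e he.1 (lt_of_le_of_ne (hf.2.1 e) hne))
    simp only [hD]
    have := hg.2.1 e
    linarith
  have h2 : ∑ e ∈ N.Eout.filter (fun e => N.tail e ∈ R), D e ≤ 0 := by
    apply Finset.sum_nonpos
    intro e he
    rw [Finset.mem_filter] at he
    have hfe := hb e he.1 he.2
    simp only [hD]
    have := hg.2.1 e
    linarith
  have h3 : ∑ e ∈ N.Eint.filter (fun e => N.tail e ∈ R ∧ N.head e ∉ R), D e ≤ 0 := by
    apply Finset.sum_nonpos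
    intro e he
    rw [Finset.mem_filter] at he
    have hfe := hcc e he.1 he.2.1 he.2.2
    simp only [hD]
    have := hg.2.1 e
    linarith
  have h4 : 0 ≤ ∑ e ∈ N.Eint.filter (fun e => N.head e ∈ R ∧ N.tail e ∉ R), D e := by
    apply Finset.sum_nonneg
    intro e he
    rw [Finset.mem_filter] at he
    have hfe := hd e he.1 he.2.1 he.2.2
    simp only [hD]
    have := hg.1 e
    linarith
  have hfin : ∑ e ∈ N.Ein, D e ≤ 0 := by linarith
  rw [hD, Finset.sum_sub_distrib] at hfin
  linarith

end MaxOrAugment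

section Attain

variable {V E : Type} [Fintype V] [Fintype E] [DecidableEq V] [DecidableEq E]
variable (N : FlowNetwork V E)

lemma isClosed_isFlow (c : E → ℝ) : IsClosed {f : E → ℝ | N.IsFlow c f} := by
  have h1 : {f : E → ℝ | N.IsFlow c f} =
      (⋂ e, {f : E → ℝ | 0 ≤ f e}) ∩ (⋂ e, {f : E → ℝ | f e ≤ c e}) ∩
      (⋂ v, {f : E → ℝ | N.ConsAt f v}) := by
    ext f
    simp only [Set.mem_inter_iff, Set.mem_iInter, Set.mem_setOf_eq, IsFlow]
    tauto
  rw [h1]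
  refine IsClosed.inter (IsClosed.inter ?_ ?_) ?_
  · exact isClosed_iInter fun e => isClosed_le continuous_const (continuous_apply e)
  · exact isClosed_iInter fun e => isClosed_le (continuous_apply e) continuous_const
  · refine isClosed_iInter fun v => ?_
    have : {f : E → ℝ | N.ConsAt f v} =
        {f : E → ℝ |
          ∑ e ∈ (N.Ein ∪ N.Eint).filter (fun e => N.head e = v), f e =
          ∑ e ∈ (N.Eout ∪ N.Eint).filter (fun e => N.tail e = v), f e} := rfl
    rw [this]
    exact isClosed_eq (continuous_finset_sum _ fun e _ => continuous_apply e)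
      (continuous_finset_sum _ fun e _ => continuous_apply e)

lemma exists_max_flow (c : E → ℝ) (T : Set (E → ℝ)) (hT : IsClosed T)
    (hne : ∃ f, N.IsFlow c f ∧ f ∈ T) :
    ∃ f, (N.IsFlow c f ∧ f ∈ T) ∧
      ∀ g, N.IsFlow c g → g ∈ T → ∑ e ∈ N.Ein, g e ≤ ∑ e ∈ N.Ein, f e := by
  set S : Set (E → ℝ) := {f | N.IsFlow c f} ∩ T with hS
  have hScl : IsClosed S := (N.isClosed_isFlow c).inter hT
  have hsub : S ⊆ Set.pi Set.univ fun e => Set.Icc (0:ℝ) (c e) := by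
    rintro f ⟨hf, -⟩ e -
    exact ⟨hf.1 e, hf.2.1 e⟩
  have hScomp : IsCompact S :=
    (isCompact_univ_pi fun e => isCompact_Icc).of_isClosed_subset hScl hsub
  obtain ⟨f₀, hf₀⟩ := hne
  have hSne : S.Nonempty := ⟨f₀, hf₀.1, hf₀.2⟩
  have hcont : Continuous fun f : E → ℝ => ∑ e ∈ N.Ein, f e :=
    continuous_finset_sum _ fun e _ => continuous_apply e
  obtain ⟨f, hfS, hmax⟩ := hScomp.exists_isMaxOn hSne hcont.continuousOn
  exact ⟨f, ⟨hfS.1, hfS.2⟩, fun g hg hgT => hmax ⟨hg, hgT⟩⟩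

lemma zero_isFlow (c : E → ℝ) (hc : ∀ e, 0 ≤ c e) : N.IsFlow c (fun _ => 0) := by
  refine ⟨fun e => le_refl 0, fun e => hc e, fun v => ?_⟩
  unfold ConsAt
  simp

lemma isFlow_mono (c c' f : E → ℝ) (hf : N.IsFlow c f) (h : ∀ e, c e ≤ c' e) :
    N.IsFlow c' f :=
  ⟨hf.1, fun e => (hf.2.1 e).trans (h e), hf.2.2⟩

lemma rcap_mono (S S' B : Finset E) (hS : S ⊆ S') (e : E) :
    N.rcap S B e ≤ N.rcap S' B e := by
  unfold rcap
  by_cases h : e ∈ (N.Ein \ S) ∪ (N.Eout \ B)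
  · rw [if_pos h]
    split
    · exact le_refl 0
    · exact N.cap_nonneg e
  · rw [if_neg h, if_neg]
    intro hmem
    apply h
    rcases Finset.mem_union.mp hmem with h' | h'
    · exact Finset.mem_union_left _ (Finset.mem_sdiff.mpr
        ⟨(Finset.mem_sdiff.mp h').1, fun hx => (Finset.mem_sdiff.mp h').2 (hS hx)⟩)
    · exact Finset.mem_union_right _ h'

lemma flow_zero_off (S B : Finset E) (f : E → ℝ) (hf : N.IsFlow (N.rcap S B) f)
    (e : E) (he : e ∈ (N.Ein \ S) ∪ (N.Eout \ B)) : f e = 0 := by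
  have := hf.2.1 e
  rw [rcap, if_pos he] at this
  exact le_antisymm this (hf.1 e)

lemma sum_eq_sum_Ein (S B : Finset E) (hS : S ⊆ N.Ein) (f : E → ℝ)
    (hf : N.IsFlow (N.rcap S B) f) : ∑ e ∈ S, f e = ∑ e ∈ N.Ein, f e := by
  rw [← Finset.sum_sdiff hS]
  have : ∑ e ∈ N.Ein \ S, f e = 0 := Finset.sum_eq_zero fun e he =>
    N.flow_zero_off S B f hf e (Finset.mem_union_left _ he)
  rw [this, zero_add]

lemma maxFromTo_mem_iff (S B : Finset E) (x : ℝ) :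
    (x ∈ {x : ℝ | ∃ f : E → ℝ, N.Feasible f ∧
      (∀ e ∈ (N.Ein \ S) ∪ (N.Eout \ B), f e = 0) ∧ x = ∑ e ∈ S, f e}) ↔
    ∃ f : E → ℝ, N.IsFlow (N.rcap S B) f ∧ x = ∑ e ∈ S, f e := by
  constructor
  · rintro ⟨f, hfe, hz, rfl⟩
    exact ⟨f, (N.isFlow_iff S B f).mpr ⟨hfe, hz⟩, rfl⟩
  · rintro ⟨f, hf, rfl⟩
    obtain ⟨hfe, hz⟩ := (N.isFlow_iff S B f).mp hf
    exact ⟨f, hfe, hz, rfl⟩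

/-- Existence of a maximum flow realizing `maxFromTo`. -/
lemma maxFromTo_spec (S B : Finset E) (hS : S ⊆ N.Ein) :
    ∃ f, N.IsFlow (N.rcap S B) f ∧ ∑ e ∈ S, f e = N.maxFromTo S B ∧
      ∀ g, N.IsFlow (N.rcap S B) g → ∑ e ∈ N.Ein, g e ≤ ∑ e ∈ N.Ein, f e := by
  obtain ⟨f, ⟨hf, -⟩, hmax⟩ := N.exists_max_flow (N.rcap S B) Set.univ isClosed_univ
    ⟨fun _ => 0, N.zero_isFlow _ (N.rcap_nonneg S B), Set.mem_univ _⟩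
  have hmax' : ∀ g, N.IsFlow (N.rcap S B) g → ∑ e ∈ N.Ein, g e ≤ ∑ e ∈ N.Ein, f e :=
    fun g hg => hmax g hg (Set.mem_univ _)
  refine ⟨f, hf, le_antisymm ?_ ?_, hmax'⟩
  · apply le_csSup
    · refine ⟨∑ e ∈ S, f e, fun x hx => ?_⟩
      obtain ⟨g, hg, rfl⟩ := (N.maxFromTo_mem_iff S B x).mp hx
      rw [N.sum_eq_sum_Ein S B hS g hg, N.sum_eq_sum_Ein S B hS f hf]
      exact hmax' g hg
    · exact (N.maxFromTo_mem_iff S B _).mpr ⟨f, hf, rfl⟩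
  · apply csSup_le
    · exact ⟨0, (N.maxFromTo_mem_iff S B 0).mpr ⟨fun _ => 0,
        N.zero_isFlow _ (N.rcap_nonneg S B), by simp⟩⟩
    · intro x hx
      obtain ⟨g, hg, rfl⟩ := (N.maxFromTo_mem_iff S B x).mp hx
      rw [N.sum_eq_sum_Ein S B hS g hg, N.sum_eq_sum_Ein S B hS f hf]
      exact hmax' g hg

lemma le_maxFromTo (S B : Finset E) (hS : S ⊆ N.Ein) (f : E → ℝ)
    (hf : N.IsFlow (N.rcap S B) f) : ∑ e ∈ S, f e ≤ N.maxFromTo S B := by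
  obtain ⟨f₀, hf₀, hval, hmax⟩ := N.maxFromTo_spec S B hS
  rw [← hval, N.sum_eq_sum_Ein S B hS f hf, N.sum_eq_sum_Ein S B hS f₀ hf₀]
  exact hmax f hf

end Attain

section Lemma1

variable {V E : Type} [Fintype V] [Fintype E] [DecidableEq V] [DecidableEq E]
variable (N : FlowNetwork V E)

/-- Key decomposition bound: for a flow with sources in `S`, the amount entering on
a sub-collection `A2 ⊆ S` of input edges is at most the max flow from `A2` alone. -/
lemma sum_A2_le_max (A2 S B : Finset E) (hA2S : A2 ⊆ S) (hS : S ⊆ N.Ein)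
    (F : E → ℝ) (hF : N.IsFlow (N.rcap S B) F) :
    ∑ e ∈ A2, F e ≤ N.maxFromTo A2 B := by
  classical
  have hA2E : A2 ⊆ N.Ein := hA2S.trans hS
  set c₁ : E → ℝ := fun e => if e ∈ N.Ein \ A2 then 0 else F e with hc₁
  have hc₁0 : ∀ e, 0 ≤ c₁ e := by
    intro e; simp only [hc₁]; split
    · exact le_refl 0
    · exact hF.1 e
  have hc₁F : ∀ e, c₁ e ≤ F e := by
    intro e; simp only [hc₁]; split
    · exact hF.1 e
    · exact le_refl _
  have hc₁rcap : ∀ e, c₁ e ≤ N.rcap A2 B e := by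
    intro e
    simp only [hc₁]
    split
    · exact N.rcap_nonneg A2 B e
    · next hnot =>
      rw [rcap]
      split
      · next hmem =>
        rcases Finset.mem_union.mp hmem with h' | h'
        · exact absurd h' hnot
        · exact le_of_eq (N.flow_zero_off S B F hF e (Finset.mem_union_right _ h'))
      · exact (hF.2.1 e).trans (N.rcap_le_cap S B e)
  obtain ⟨g, ⟨hgflow, -⟩, hgmax⟩ := N.exists_max_flow c₁ Set.univ isClosed_univ
    ⟨fun _ => 0, N.zero_isFlow c₁ hc₁0, Set.mem_univ _⟩
  have hgmax' : ∀ g', N.IsFlow c₁ g' → ∑ e ∈ N.Ein, g' e ≤ ∑ e ∈ N.Ein, g e :=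
    fun g' hg' => hgmax g' hg' (Set.mem_univ _)
  rcases N.max_or_augment c₁ g hgflow with ⟨g', hg', -, hlt⟩ | ⟨R, ha, hb, hcc, hd⟩
  · exact absurd (hgmax' g' hg') (not_le.mpr hlt)
  · set D : E → ℝ := fun e => F e - g e with hDdef
    have hDcons : ∀ v, N.ConsAt D v := fun v =>
      N.consAt_sub g F v (hgflow.2.2 v) (hF.2.2 v)
    have hD0 : ∀ e, 0 ≤ D e := by
      intro e; simp only [hDdef]
      have h1 := hgflow.2.1 e
      have h2 := hc₁F e
      linarith
    have hcut := N.cut_identity D hDcons R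
    have hnotin : ∀ e, e ∉ N.Ein → c₁ e = F e := by
      intro e he
      simp only [hc₁, if_neg (fun hmem => he (Finset.mem_sdiff.mp hmem).1)]
    have hout : ∑ e ∈ N.Eout.filter (fun e => N.tail e ∈ R), D e = 0 := by
      apply Finset.sum_eq_zero
      intro e he
      rw [Finset.mem_filter] at he
      have h1 := hb e he.1 he.2
      have h2 := hnotin e (Finset.disjoint_right.mp N.disj_in_out he.1)
      simp only [hDdef]; linarith
    have hco : ∑ e ∈ N.Eint.filter (fun e => N.tail e ∈ R ∧ N.head e ∉ R), D e = 0 := by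
      apply Finset.sum_eq_zero
      intro e he
      rw [Finset.mem_filter] at he
      have h1 := hcc e he.1 he.2.1 he.2.2
      have h2 := hnotin e (Finset.disjoint_right.mp N.disj_in_int he.1)
      simp only [hDdef]; linarith
    have hci : 0 ≤ ∑ e ∈ N.Eint.filter (fun e => N.head e ∈ R ∧ N.tail e ∉ R), D e :=
      Finset.sum_nonneg fun e _ => hD0 e
    have hin0 : ∀ e ∈ N.Ein.filter (fun e => N.head e ∈ R), D e = 0 := by
      have hsum0 : ∑ e ∈ N.Ein.filter (fun e => N.head e ∈ R), D e = 0 := by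
        have hge : 0 ≤ ∑ e ∈ N.Ein.filter (fun e => N.head e ∈ R), D e :=
          Finset.sum_nonneg fun e _ => hD0 e
        linarith
      intro e he
      exact (Finset.sum_eq_zero_iff_of_nonneg fun e _ => hD0 e).mp hsum0 e he
    have hFg : ∀ e ∈ A2, F e = g e := by
      intro e he
      have heE : e ∈ N.Ein := hA2E he
      have hc₁e : c₁ e = F e := by
        simp only [hc₁, if_neg (fun hmem => (Finset.mem_sdiff.mp hmem).2 he)]
      by_cases hR : N.head e ∈ R
      · have := hin0 e (Finset.mem_filter.mpr ⟨heE, hR⟩)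
        simp only [hDdef] at this
        linarith
      · have hsat : ¬ (g e < c₁ e) := fun hlt => hR (ha e heE hlt)
        have h1 : c₁ e ≤ g e := not_lt.mp hsat
        have h2 := hgflow.2.1 e
        linarith
    have hsumeq : ∑ e ∈ A2, F e = ∑ e ∈ A2, g e :=
      Finset.sum_congr rfl hFg
    rw [hsumeq]
    exact N.le_maxFromTo A2 B hA2E g
      (N.isFlow_mono c₁ (N.rcap A2 B) g hgflow hc₁rcap)

end Lemma1

section Main

variable {V E : Type} [Fintype V] [Fintype E] [DecidableEq V] [DecidableEq E]

/-- `maxFromToAft N (A1,B | A2,B) = maxFromTo N (A1 ∪ A2) B - maxFromTo N A2 B`. -/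
theorem stmt5 (N : FlowNetwork V E) (A1 A2 B : Finset E)
    (hA1 : A1 ⊆ N.Ein) (hA2 : A2 ⊆ N.Ein) (hdisj : Disjoint A1 A2)
    (hB : B ⊆ N.Eout) :
    N.maxFromToAftIn A1 B A2 = N.maxFromTo (A1 ∪ A2) B - N.maxFromTo A2 B := by
  classical
  set S := A1 ∪ A2 with hSdef
  have hSE : S ⊆ N.Ein := Finset.union_subset hA1 hA2
  set M12 := N.maxFromTo S B with hM12
  set M2 := N.maxFromTo A2 B with hM2def
  -- a maximum flow for A2
  obtain ⟨h, hhflow, hhval, -⟩ := N.maxFromTo_spec A2 B hA2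
  have hhflowS : N.IsFlow (N.rcap S B) h :=
    N.isFlow_mono _ _ h hhflow (N.rcap_mono A2 S B Finset.subset_union_right)
  -- maximize value subject to Σ_{A2} ≥ M2
  set T : Set (E → ℝ) := {f | M2 ≤ ∑ e ∈ A2, f e} with hTdef
  have hTcl : IsClosed T :=
    isClosed_le continuous_const (continuous_finset_sum _ fun e _ => continuous_apply e)
  obtain ⟨F, ⟨hFflow, hFT⟩, hFmax⟩ := N.exists_max_flow (N.rcap S B) T hTcl
    ⟨h, hhflowS, le_of_eq hhval.symm⟩
  have hFT' : M2 ≤ ∑ e ∈ A2, F e := hFT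
  -- F attains the maximum value M12
  have hFval : ∑ e ∈ N.Ein, F e = M12 := by
    apply le_antisymm
    · rw [← N.sum_eq_sum_Ein S B hSE F hFflow]
      exact N.le_maxFromTo S B hSE F hFflow
    · rcases N.max_or_augment (N.rcap S B) F hFflow with
        ⟨g, hg, hgin, hlt⟩ | ⟨R, ha, hb, hcc, hd⟩
      · exfalso
        have hgT : g ∈ T := by
          have h1 : ∑ e ∈ A2, F e ≤ ∑ e ∈ A2, g e :=
            Finset.sum_le_sum fun e he => hgin e (hA2 he)
          exact le_trans hFT' h1
        exact absurd (hFmax g hg hgT) (not_le.mpr hlt)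
      · obtain ⟨f₀, hf₀flow, hf₀val, -⟩ := N.maxFromTo_spec S B hSE
        rw [hM12, ← hf₀val, N.sum_eq_sum_Ein S B hSE f₀ hf₀flow]
        exact N.cut_bound (N.rcap S B) F hFflow R ha hb hcc hd f₀ hf₀flow
  have hFA2 : ∑ e ∈ A2, F e = M2 :=
    le_antisymm (N.sum_A2_le_max A2 S B Finset.subset_union_right hSE F hFflow) hFT'
  have hFS : ∑ e ∈ S, F e = M12 := by
    rw [N.sum_eq_sum_Ein S B hSE F hFflow]; exact hFval
  have hsplit : ∑ e ∈ S, F e = ∑ e ∈ A1, F e + ∑ e ∈ A2, F e := Finset.sum_union hdisj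
  have hFA1 : ∑ e ∈ A1, F e = M12 - M2 := by
    rw [hsplit, hFA2] at hFS; linarith
  have hM2nonneg : 0 ≤ M2 := by
    rw [← hFA2]; exact Finset.sum_nonneg fun e _ => hFflow.1 e
  have hM2le : M2 ≤ M12 := by
    have h0 : (0:ℝ) ≤ ∑ e ∈ A1, F e := Finset.sum_nonneg fun e _ => hFflow.1 e
    rw [hsplit, hFA2] at hFS
    linarith
  have hM12nonneg : 0 ≤ M12 := le_trans hM2nonneg hM2le
  have hFB : ∑ e ∈ B, F e = M12 := by
    have h1 : ∑ e ∈ N.Ein, F e = ∑ e ∈ N.Eout, F e := N.val_in_eq_out F hFflow.2.2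
    have h2 : ∑ e ∈ N.Eout \ B, F e + ∑ e ∈ B, F e = ∑ e ∈ N.Eout, F e :=
      Finset.sum_sdiff hB
    have h3 : ∑ e ∈ N.Eout \ B, F e = 0 := Finset.sum_eq_zero fun e he =>
      N.flow_zero_off S B F hFflow e (Finset.mem_union_right _ he)
    rw [hFval] at h1
    linarith
  -- scaling factor
  set lam : ℝ := M2 / M12 with hlamdef
  have hlam0 : 0 ≤ lam := div_nonneg hM2nonneg hM12nonneg
  have hlam1 : lam ≤ 1 := by
    rcases eq_or_lt_of_le hM12nonneg with h0 | h0
    · simp only [hlamdef, ← h0, div_zero]; norm_num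
    · exact (div_le_one h0).mpr hM2le
  have hlamM : lam * M12 = M2 := by
    rcases eq_or_lt_of_le hM12nonneg with h0 | h0
    · have hM20 : M2 = 0 := le_antisymm (h0 ▸ hM2le) hM2nonneg
      simp [hlamdef, hM20]
    · rw [hlamdef]
      field_simp
  -- disjointness facts
  have hBnotA2 : ∀ e ∈ B, e ∉ A2 := fun e he ha =>
    Finset.disjoint_left.mp N.disj_in_out (hA2 ha) (hB he)
  have hA1notA2 : ∀ e ∈ A1, e ∉ A2 := fun e he => Finset.disjoint_left.mp hdisj he
  have hA1notB : ∀ e ∈ A1, e ∉ B := fun e he hb =>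
    Finset.disjoint_left.mp N.disj_in_out (hA1 he) (hB hb)
  -- the witness pair (f, f')
  set f' : E → ℝ := fun e => if e ∈ A2 then F e else if e ∈ B then lam * F e else 0
    with hf'def
  set f : E → ℝ := fun e => F e - f' e with hfdef
  have hf'0 : ∀ e, 0 ≤ f' e := by
    intro e
    simp only [hf'def]
    split
    · exact hFflow.1 e
    · split
      · exact mul_nonneg hlam0 (hFflow.1 e)
      · exact le_refl 0
  have hf'le : ∀ e, f' e ≤ F e := by
    intro e
    simp only [hf'def]
    split
    · exact le_refl _
    · split
      · nlinarith [hFflow.1 e]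
      · exact hFflow.1 e
  have hf0 : ∀ e, 0 ≤ f e := fun e => by
    simp only [hfdef]; linarith [hf'le e]
  have hadd : f + f' = F := by
    funext e
    simp only [Pi.add_apply, hfdef]
    ring
  obtain ⟨hFfeas, hFvanish⟩ := (N.isFlow_iff S B F).mp hFflow
  have hf'A2 : ∑ e ∈ A2, f' e = M2 := by
    rw [← hFA2]
    exact Finset.sum_congr rfl fun e he => by simp only [hf'def, if_pos he]
  have hf'B : ∑ e ∈ B, f' e = M2 := by
    have h1 : ∑ e ∈ B, f' e = ∑ e ∈ B, lam * F e :=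
      Finset.sum_congr rfl fun e he => by
        simp only [hf'def, if_neg (hBnotA2 e he), if_pos he]
    rw [h1, ← Finset.mul_sum, hFB, hlamM]
  have hfA1 : ∑ e ∈ A1, f e = M12 - M2 := by
    rw [← hFA1]
    refine Finset.sum_congr rfl fun e he => ?_
    simp only [hfdef, hf'def, if_neg (hA1notA2 e he), if_neg (hA1notB e he)]
    ring
  -- membership of M12 - M2 in the defining set
  have hmem : (M12 - M2) ∈ {x : ℝ | ∃ f f' : E → ℝ, (∀ e, 0 ≤ f e) ∧ (∀ e, 0 ≤ f' e) ∧
      N.Feasible (f + f') ∧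
      ∑ e ∈ A2, f' e = N.maxFromTo A2 B ∧ ∑ e ∈ B, f' e = N.maxFromTo A2 B ∧
      (∀ e ∈ (N.Ein \ (A1 ∪ A2)) ∪ (N.Eout \ B), f e + f' e = 0) ∧
      x = ∑ e ∈ A1, f e} := by
    refine ⟨f, f', hf0, hf'0, by rw [hadd]; exact hFfeas, hf'A2, hf'B, ?_, hfA1.symm⟩
    intro e he
    have : (f + f') e = 0 := by rw [hadd]; exact hFvanish e he
    simpa using this
  -- upper bound
  have hub : ∀ x ∈ {x : ℝ | ∃ f f' : E → ℝ, (∀ e, 0 ≤ f e) ∧ (∀ e, 0 ≤ f' e) ∧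
      N.Feasible (f + f') ∧
      ∑ e ∈ A2, f' e = N.maxFromTo A2 B ∧ ∑ e ∈ B, f' e = N.maxFromTo A2 B ∧
      (∀ e ∈ (N.Ein \ (A1 ∪ A2)) ∪ (N.Eout \ B), f e + f' e = 0) ∧
      x = ∑ e ∈ A1, f e}, x ≤ M12 - M2 := by
    rintro x ⟨g, g', hg0, hg'0, hgfeas, hgA2, hgB, hgvanish, rfl⟩
    have hgflow : N.IsFlow (N.rcap S B) (g + g') :=
      (N.isFlow_iff S B (g + g')).mpr ⟨hgfeas, fun e he => by
        simpa using hgvanish e he⟩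
    have hle : ∑ e ∈ S, (g + g') e ≤ M12 := N.le_maxFromTo S B hSE (g + g') hgflow
    have hsum2 : ∑ e ∈ S, (g + g') e =
        (∑ e ∈ A1, g e + ∑ e ∈ A1, g' e) + (∑ e ∈ A2, g e + ∑ e ∈ A2, g' e) := by
      rw [show ∑ e ∈ S, (g + g') e = ∑ e ∈ A1, (g + g') e + ∑ e ∈ A2, (g + g') e from
        Finset.sum_union hdisj]
      simp only [Pi.add_apply, Finset.sum_add_distrib]
    have h1 : (0:ℝ) ≤ ∑ e ∈ A1, g' e := Finset.sum_nonneg fun e _ => hg'0 e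
    have h2 : (0:ℝ) ≤ ∑ e ∈ A2, g e := Finset.sum_nonneg fun e _ => hg0 e
    rw [hsum2] at hle
    rw [← hM2def] at hgA2
    linarith [hgA2]
  -- conclude
  rw [maxFromToAftIn]
  apply le_antisymm
  · exact csSup_le ⟨M12 - M2, hmem⟩ hub
  · exact le_csSup ⟨M12 - M2, hub⟩ hmem

end Main

end FlowNetwork
end

section
/- Let N = (G, c) be a flow network. For every feasible flow f and all A ⊆ Ein, B ⊆ Eout, it holds that −maxFromTo_N(Ein \ A, B) ≤ f(A) − f(B) ≤ maxFromTo_N(A, Eout \ B). -/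
open Finset

namespace FlowNetwork

variable {V E : Type} [Fintype V] [Fintype E] [DecidableEq V] [DecidableEq E]

set_option linter.unusedSectionVars false

lemma sum_filter_eq_sum_filter_mem (s : Finset E) (S : Finset V) (φ : E → V) (h : E → ℝ) :
    ∑ v ∈ S, ∑ e ∈ s.filter (fun e => φ e = v), h e
      = ∑ e ∈ s.filter (fun e => φ e ∈ S), h e := by
  rw [← Finset.sum_fiberwise_of_maps_to (g := φ) (t := S)
    (fun e he => (Finset.mem_filter.mp he).2) h]
  refine Finset.sum_congr rfl fun v hv => Finset.sum_congr ?_ fun _ _ => rfl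
  rw [Finset.filter_filter]
  exact Finset.filter_congr fun e _ => ⟨fun h => ⟨h ▸ hv, h⟩, fun h => h.2⟩

lemma sum_count_eq (t : Finset E) :
    ∀ L : List E, ∑ e ∈ t, (L.count e : ℝ) = (L.map (fun x => if x ∈ t then (1:ℝ) else 0)).sum
  | [] => by simp
  | a :: L => by
      simp only [List.count_cons, List.map_cons, List.sum_cons, Nat.cast_add, beq_iff_eq]
      rw [Finset.sum_add_distrib, sum_count_eq t L]
      have h1 : (∑ x ∈ t, ((if a = x then 1 else 0 : ℕ) : ℝ)) = if a ∈ t then (1:ℝ) else 0 := by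
        push_cast
        rw [Finset.sum_ite_eq t a (fun _ => (1:ℝ))]
      rw [h1]; ring

lemma sum_in_eq_sum_out_s7 (N : FlowNetwork V E) (f : E → ℝ)
    (hc : ∀ v : V, ∑ e ∈ (N.Ein ∪ N.Eint).filter (fun e => N.head e = v), f e =
      ∑ e ∈ (N.Eout ∪ N.Eint).filter (fun e => N.tail e = v), f e) :
    ∑ e ∈ N.Ein, f e = ∑ e ∈ N.Eout, f e := by
  have h1 : ∑ v ∈ (univ : Finset V), ∑ e ∈ (N.Ein ∪ N.Eint).filter (fun e => N.head e = v), f e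
      = ∑ v ∈ (univ : Finset V), ∑ e ∈ (N.Eout ∪ N.Eint).filter (fun e => N.tail e = v), f e :=
    Finset.sum_congr rfl fun v _ => hc v
  rw [sum_filter_eq_sum_filter_mem, sum_filter_eq_sum_filter_mem] at h1
  simp only [Finset.mem_univ, Finset.filter_true] at h1
  rw [Finset.sum_union N.disj_in_int, Finset.sum_union N.disj_out_int] at h1
  linarith

/-- Walks along edges satisfying `P`. -/
def IsWalk (N : FlowNetwork V E) (P : E → Prop) : V → V → List E → Prop
  | u, w, [] => u = w
  | u, w, e :: L => e ∈ N.Eint ∧ P e ∧ N.tail e = u ∧ IsWalk N P (N.head e) w L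

lemma exists_walk_s7 (N : FlowNetwork V E) (P : E → Prop) {u w : V}
    (h : Relation.ReflTransGen
      (fun a b => ∃ e, e ∈ N.Eint ∧ P e ∧ N.tail e = a ∧ N.head e = b) u w) :
    ∃ L, N.IsWalk P u w L := by
  induction h using Relation.ReflTransGen.head_induction_on with
  | refl => exact ⟨[], rfl⟩
  | head hstep _ ih =>
      obtain ⟨e, he, hPe, ht, hh⟩ := hstep
      obtain ⟨L, hL⟩ := ih
      exact ⟨e :: L, he, hPe, ht, by rwa [hh]⟩

lemma walk_mem (N : FlowNetwork V E) (P : E → Prop) :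
    ∀ (L : List E) (u w : V), N.IsWalk P u w L → ∀ e ∈ L, e ∈ N.Eint ∧ P e
  | [], _, _, _, e, he => by simp at he
  | a :: L, u, w, h, e, he => by
      obtain ⟨h1, h2, _, h4⟩ := h
      rcases List.mem_cons.mp he with rfl | he'
      · exact ⟨h1, h2⟩
      · exact walk_mem N P L _ w h4 e he'

lemma walk_balance (N : FlowNetwork V E) (P : E → Prop) :
    ∀ (L : List E) (u w : V), N.IsWalk P u w L → ∀ v : V,
      (if u = v then (1:ℝ) else 0)
        + (L.map (fun e => if N.head e = v then (1:ℝ) else 0)).sum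
      = (L.map (fun e => if N.tail e = v then (1:ℝ) else 0)).sum
        + (if w = v then (1:ℝ) else 0)
  | [], u, w, h, v => by
      have : u = w := h
      subst this; simp
  | e :: L, u, w, h, v => by
      obtain ⟨_, _, ht, hrest⟩ := h
      have ih := walk_balance N P L (N.head e) w hrest v
      subst ht
      simp only [List.map_cons, List.sum_cons]
      linarith


lemma key (N : FlowNetwork V E) (f : E → ℝ) (hf : N.Feasible f)
    (A B : Finset E) (hA : A ⊆ N.Ein) (hB : B ⊆ N.Eout) :
    ∑ e ∈ A, f e - ∑ e ∈ B, f e ≤ N.maxFromTo A (N.Eout \ B) := by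
  classical
  set Z : Finset E := (N.Ein \ A) ∪ B with hZdef
  set K : Set (E → ℝ) := {g | (∀ e, 0 ≤ g e ∧ g e ≤ f e) ∧
      (∀ v : V, ∑ e ∈ (N.Ein ∪ N.Eint).filter (fun e => N.head e = v), g e =
        ∑ e ∈ (N.Eout ∪ N.Eint).filter (fun e => N.tail e = v), g e) ∧
      (∀ e ∈ Z, g e = 0)} with hKdef
  have hKclosed : IsClosed K := by
    have c1 : IsClosed {g : E → ℝ | ∀ e, 0 ≤ g e ∧ g e ≤ f e} := by
      rw [Set.setOf_forall]
      exact isClosed_iInter fun e => IsClosed.inter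
        (isClosed_le continuous_const (continuous_apply e))
        (isClosed_le (continuous_apply e) continuous_const)
    have c2 : IsClosed {g : E → ℝ |
        ∀ v : V, ∑ e ∈ (N.Ein ∪ N.Eint).filter (fun e => N.head e = v), g e =
          ∑ e ∈ (N.Eout ∪ N.Eint).filter (fun e => N.tail e = v), g e} := by
      rw [Set.setOf_forall]
      exact isClosed_iInter fun v => isClosed_eq
        (continuous_finset_sum _ fun e _ => continuous_apply e)
        (continuous_finset_sum _ fun e _ => continuous_apply e)
    have c3 : IsClosed {g : E → ℝ | ∀ e ∈ Z, g e = 0} := by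
      rw [Set.setOf_forall]
      refine isClosed_iInter fun e => ?_
      by_cases he : e ∈ Z
      · simp only [he, true_implies]
        exact isClosed_eq (continuous_apply e) continuous_const
      · simp only [he, false_implies, Set.setOf_true]
        exact isClosed_univ
    exact IsClosed.inter c1 (IsClosed.inter c2 c3)
  have hKcpt : IsCompact K := by
    refine IsCompact.of_isClosed_subset (isCompact_univ_pi fun e => isCompact_Icc
      (a := (0:ℝ)) (b := f e)) hKclosed ?_
    intro g hg e _
    exact ⟨(hg.1 e).1, (hg.1 e).2⟩
  have h0K : (0 : E → ℝ) ∈ K := by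
    refine ⟨fun e => ⟨le_refl _, hf.1 e⟩, fun v => ?_, fun e _ => rfl⟩
    simp
  obtain ⟨g, hgK, hgmax⟩ := hKcpt.exists_isMaxOn ⟨0, h0K⟩
    ((continuous_finset_sum A fun e _ => continuous_apply e).continuousOn)
  obtain ⟨hg01, hgcons, hgZ⟩ := hgK
  -- the key claim
  have claim : ∑ e ∈ A, f e - ∑ e ∈ B, f e ≤ ∑ e ∈ A, g e := by
    by_contra hcon
    push_neg at hcon
    set h : E → ℝ := fun e => f e - g e with hhdef
    have hhnn : ∀ e, 0 ≤ h e := fun e => sub_nonneg.mpr (hg01 e).2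
    have hhcons : ∀ v : V, ∑ e ∈ (N.Ein ∪ N.Eint).filter (fun e => N.head e = v), h e =
        ∑ e ∈ (N.Eout ∪ N.Eint).filter (fun e => N.tail e = v), h e := by
      intro v
      simp only [hhdef, Finset.sum_sub_distrib]
      rw [hf.2.2 v, hgcons v]
    set SP : V → Prop := fun v => ∃ e ∈ A, 0 < h e ∧ Relation.ReflTransGen
      (fun a b => ∃ e', e' ∈ N.Eint ∧ 0 < h e' ∧ N.tail e' = a ∧ N.head e' = b)
      (N.head e) v with hSPdef
    set S : Finset V := univ.filter SP with hSdef
    have hmemS : ∀ v, v ∈ S ↔ SP v := fun v => by simp [hSdef]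
    have hstartS : ∀ e ∈ A, 0 < h e → N.head e ∈ S := fun e he hpos =>
      (hmemS _).2 ⟨e, he, hpos, Relation.ReflTransGen.refl⟩
    have hstepS : ∀ e ∈ N.Eint, 0 < h e → N.tail e ∈ S → N.head e ∈ S := by
      intro e he hpos htl
      obtain ⟨e0, he0, hp0, hr⟩ := (hmemS _).1 htl
      exact (hmemS _).2 ⟨e0, he0, hp0, hr.tail ⟨e, he, hpos, rfl, rfl⟩⟩
    have hcut : ∑ v ∈ S, ∑ e ∈ (N.Ein ∪ N.Eint).filter (fun e => N.head e = v), h e =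
        ∑ v ∈ S, ∑ e ∈ (N.Eout ∪ N.Eint).filter (fun e => N.tail e = v), h e :=
      Finset.sum_congr rfl fun v _ => hhcons v
    rw [sum_filter_eq_sum_filter_mem, sum_filter_eq_sum_filter_mem,
      Finset.filter_union, Finset.filter_union,
      Finset.sum_union (N.disj_in_int.mono (Finset.filter_subset _ _) (Finset.filter_subset _ _)),
      Finset.sum_union (N.disj_out_int.mono (Finset.filter_subset _ _) (Finset.filter_subset _ _))]
      at hcut
    -- b2 ≤ a2
    have hb2a2 : ∑ e ∈ N.Eint.filter (fun e => N.tail e ∈ S), h e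
        ≤ ∑ e ∈ N.Eint.filter (fun e => N.head e ∈ S), h e := by
      have e1 : ∑ e ∈ (N.Eint.filter (fun e => N.tail e ∈ S)).filter (fun e => 0 < h e), h e
          = ∑ e ∈ N.Eint.filter (fun e => N.tail e ∈ S), h e :=
        Finset.sum_filter_of_ne (fun e _ hne => lt_of_le_of_ne (hhnn e) (Ne.symm hne))
      rw [← e1]
      refine Finset.sum_le_sum_of_subset_of_nonneg ?_ (fun e _ _ => hhnn e)
      intro e he
      simp only [Finset.mem_filter] at he ⊢
      exact ⟨he.1.1, hstepS e he.1.1 he.2 he.1.2⟩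
    -- h(A) ≤ a1
    have hA1 : ∑ e ∈ A, h e ≤ ∑ e ∈ N.Ein.filter (fun e => N.head e ∈ S), h e := by
      have e1 : ∑ e ∈ A.filter (fun e => N.head e ∈ S), h e = ∑ e ∈ A, h e :=
        Finset.sum_filter_of_ne (fun e heA hne => hstartS e heA (lt_of_le_of_ne (hhnn e) (Ne.symm hne)))
      rw [← e1]
      refine Finset.sum_le_sum_of_subset_of_nonneg ?_ (fun e _ _ => hhnn e)
      intro e he
      simp only [Finset.mem_filter] at he ⊢
      exact ⟨hA he.1, he.2⟩
    have hsplit : ∑ e ∈ N.Eout.filter (fun e => N.tail e ∈ S), h e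
        = ∑ e ∈ B.filter (fun e => N.tail e ∈ S), h e
          + ∑ e ∈ (N.Eout \ B).filter (fun e => N.tail e ∈ S), h e := by
      rw [← Finset.sum_union ((Finset.disjoint_sdiff).mono
        (Finset.filter_subset _ _) (Finset.filter_subset _ _)), ← Finset.filter_union,
        Finset.union_sdiff_of_subset hB]
    have hBbound : ∑ e ∈ B.filter (fun e => N.tail e ∈ S), h e ≤ ∑ e ∈ B, h e :=
      Finset.sum_le_sum_of_subset_of_nonneg (Finset.filter_subset _ _) (fun e _ _ => hhnn e)
    have hAB : ∑ e ∈ B, h e < ∑ e ∈ A, h e := by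
      have hgB : ∑ e ∈ B, g e = 0 :=
        Finset.sum_eq_zero fun e he => hgZ e (Finset.mem_union_right _ he)
      simp only [hhdef, Finset.sum_sub_distrib]
      linarith
    have hpos : 0 < ∑ e ∈ (N.Eout \ B).filter (fun e => N.tail e ∈ S), h e := by linarith
    have hex : ∃ e ∈ (N.Eout \ B).filter (fun e => N.tail e ∈ S), 0 < h e := by
      by_contra hno
      push_neg at hno
      have : ∑ e ∈ (N.Eout \ B).filter (fun e => N.tail e ∈ S), h e = 0 :=
        Finset.sum_eq_zero fun e he => le_antisymm (hno e he) (hhnn e)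
      linarith
    obtain ⟨estar, hestar, hpstar⟩ := hex
    simp only [Finset.mem_filter, Finset.mem_sdiff] at hestar
    obtain ⟨⟨hesEout, hesB⟩, hesS⟩ := hestar
    obtain ⟨e0, he0A, hp0, hreach⟩ := (hmemS _).1 hesS
    obtain ⟨L, hLwalk⟩ := N.exists_walk_s7 (fun e => 0 < h e) hreach
    have he0in : e0 ∈ N.Ein := hA he0A
    have hLmem : ∀ e ∈ L, e ∈ N.Eint ∧ 0 < h e := N.walk_mem _ L _ _ hLwalk
    set w : E → ℝ := fun e =>
      (if e = e0 then 1 else 0) + (L.count e : ℝ) + (if e = estar then 1 else 0) with hwdef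
    have hwnn : ∀ e, 0 ≤ w e := by
      intro e
      simp only [hwdef]
      have h0 : (0:ℝ) ≤ (L.count e : ℝ) := Nat.cast_nonneg _
      split_ifs <;> linarith
    have hwsupp : ∀ e, w e ≠ 0 → 0 < h e ∧ 0 < w e := by
      intro e hne
      refine ⟨?_, lt_of_le_of_ne (hwnn e) (Ne.symm hne)⟩
      by_cases h1 : e = e0
      · exact h1 ▸ hp0
      by_cases h2 : e = estar
      · exact h2 ▸ hpstar
      have hcnt : e ∈ L := by
        by_contra hnotin
        have hc0 : L.count e = 0 := List.count_eq_zero.mpr hnotin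
        simp [hwdef, h1, h2, hc0] at hne
      exact (hLmem e hcnt).2
    set T : Finset E := univ.filter (fun e => w e ≠ 0) with hTdef
    have he0T : e0 ∈ T := by
      simp only [hTdef, Finset.mem_filter, Finset.mem_univ, true_and, hwdef]
      intro habs
      have h0 : (0:ℝ) ≤ (L.count e0 : ℝ) := Nat.cast_nonneg _
      split_ifs at habs <;> linarith
    set Timg := T.image (fun e => h e / w e) with hTimg
    have hTne : Timg.Nonempty := ⟨_, Finset.mem_image_of_mem _ he0T⟩
    set ε := Timg.min' hTne with hεdef
    have hεpos : 0 < ε := by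
      rw [hεdef]
      refine (Finset.lt_min'_iff Timg hTne).2 ?_
      intro b hb
      rw [hTimg] at hb
      obtain ⟨e, heT, rfl⟩ := Finset.mem_image.mp hb
      have hTmem : w e ≠ 0 := by
        rw [hTdef] at heT
        exact (Finset.mem_filter.mp heT).2
      obtain ⟨hhe, hwe⟩ := hwsupp e hTmem
      positivity
    have hεle : ∀ e, w e ≠ 0 → ε * w e ≤ h e := by
      intro e hne
      obtain ⟨hhe, hwe⟩ := hwsupp e hne
      have hle : ε ≤ h e / w e := by
        rw [hεdef]
        refine Finset.min'_le _ _ ?_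
        rw [hTimg]
        refine Finset.mem_image_of_mem _ ?_
        rw [hTdef]
        simp [hne]
      calc ε * w e ≤ (h e / w e) * w e := mul_le_mul_of_nonneg_right hle hwe.le
        _ = h e := div_mul_cancel₀ _ hne
    -- weight sum over any finset
    have hwsum : ∀ t : Finset E, ∑ e ∈ t, w e
        = (if e0 ∈ t then (1:ℝ) else 0)
          + (L.map (fun x => if x ∈ t then (1:ℝ) else 0)).sum
          + (if estar ∈ t then (1:ℝ) else 0) := by
      intro t
      simp only [hwdef]
      rw [Finset.sum_add_distrib, Finset.sum_add_distrib, sum_count_eq,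
        Finset.sum_ite_eq' t e0 (fun _ => (1:ℝ)), Finset.sum_ite_eq' t estar (fun _ => (1:ℝ))]
    -- the improved flow
    set g' : E → ℝ := fun e => g e + ε * w e with hg'def
    have he0estar : e0 ≠ estar := fun hcon' =>
      Finset.disjoint_left.mp N.disj_in_out he0in (hcon' ▸ hesEout)
    have hg'K : g' ∈ K := by
      refine ⟨?_, ?_, ?_⟩
      · intro e
        constructor
        · exact add_nonneg (hg01 e).1 (mul_nonneg hεpos.le (hwnn e))
        · by_cases hne : w e = 0
          · simp only [hg'def, hne, mul_zero, add_zero]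
            exact (hg01 e).2
          · have := hεle e hne
            simp only [hg'def, hhdef] at *
            linarith
      · intro v
        simp only [hg'def]
        rw [Finset.sum_add_distrib, Finset.sum_add_distrib, hgcons v, ← Finset.mul_sum,
          ← Finset.mul_sum]
        congr 1
        rw [hwsum, hwsum]
        have hbal := N.walk_balance (fun e => 0 < h e) L (N.head e0) (N.tail estar) hLwalk v
        -- membership simplifications
        have m1 : (e0 ∈ (N.Ein ∪ N.Eint).filter (fun e => N.head e = v)) = (N.head e0 = v) := by
          simp [Finset.mem_filter, Finset.mem_union, he0in]
        have m2 : (estar ∈ (N.Ein ∪ N.Eint).filter (fun e => N.head e = v)) = False := by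
          simp only [Finset.mem_filter, Finset.mem_union, eq_iff_iff, iff_false]
          rintro ⟨hmem, -⟩
          rcases hmem with hmem | hmem
          · exact Finset.disjoint_left.mp N.disj_in_out hmem hesEout
          · exact Finset.disjoint_left.mp N.disj_out_int hesEout hmem
        have m3 : (e0 ∈ (N.Eout ∪ N.Eint).filter (fun e => N.tail e = v)) = False := by
          simp only [Finset.mem_filter, Finset.mem_union, eq_iff_iff, iff_false]
          rintro ⟨hmem, -⟩
          rcases hmem with hmem | hmem
          · exact Finset.disjoint_left.mp N.disj_in_out he0in hmem
          · exact Finset.disjoint_left.mp N.disj_in_int he0in hmem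
        have m4 : (estar ∈ (N.Eout ∪ N.Eint).filter (fun e => N.tail e = v)) = (N.tail estar = v) := by
          simp [Finset.mem_filter, Finset.mem_union, hesEout]
        have l1 : (L.map (fun x => if x ∈ (N.Ein ∪ N.Eint).filter (fun e => N.head e = v)
              then (1:ℝ) else 0)).sum
            = (L.map (fun x => if N.head x = v then (1:ℝ) else 0)).sum := by
          congr 1
          refine List.map_congr_left ?_
          intro x hx
          have hxint := (hLmem x hx).1
          congr 1
          simp [Finset.mem_filter, Finset.mem_union, hxint]
        have l2 : (L.map (fun x => if x ∈ (N.Eout ∪ N.Eint).filter (fun e => N.tail e = v)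
              then (1:ℝ) else 0)).sum
            = (L.map (fun x => if N.tail x = v then (1:ℝ) else 0)).sum := by
          congr 1
          refine List.map_congr_left ?_
          intro x hx
          have hxint := (hLmem x hx).1
          congr 1
          simp [Finset.mem_filter, Finset.mem_union, hxint]
        simp only [m1, m2, m3, m4, if_false]
        rw [l1, l2]
        congr 1
        linarith
      · intro e heZ
        have hwe0 : w e = 0 := by
          rw [hZdef] at heZ
          rcases Finset.mem_union.mp heZ with heZ | heZ
          · obtain ⟨heEin, heA⟩ := Finset.mem_sdiff.mp heZ
            have q1 : e ≠ e0 := fun hq => heA (hq ▸ he0A)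
            have q2 : e ≠ estar := fun hq =>
              Finset.disjoint_left.mp N.disj_in_out heEin (hq ▸ hesEout)
            have q3 : e ∉ L := fun hq =>
              Finset.disjoint_left.mp N.disj_in_int heEin (hLmem e hq).1
            simp [hwdef, q1, q2, List.count_eq_zero.mpr q3]
          · have heEout : e ∈ N.Eout := hB heZ
            have q1 : e ≠ e0 := fun hq =>
              Finset.disjoint_left.mp N.disj_in_out (hq ▸ he0in) heEout
            have q2 : e ≠ estar := fun hq => hesB (hq ▸ heZ)
            have q3 : e ∉ L := fun hq =>
              Finset.disjoint_left.mp N.disj_out_int heEout (hLmem e hq).1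
            simp [hwdef, q1, q2, List.count_eq_zero.mpr q3]
        simp [hg'def, hwe0, hgZ e heZ]
    have hAw : ∑ e ∈ A, w e = 1 := by
      rw [hwsum A]
      have i1 : (if e0 ∈ A then (1:ℝ) else 0) = 1 := if_pos he0A
      have i2 : (if estar ∈ A then (1:ℝ) else 0) = 0 := by
        rw [if_neg]
        intro hq
        exact Finset.disjoint_left.mp N.disj_in_out (hA hq) hesEout
      have i3 : (L.map (fun x => if x ∈ A then (1:ℝ) else 0)).sum = 0 := by
        refine List.sum_eq_zero ?_
        intro y hy
        obtain ⟨x, hx, rfl⟩ := List.mem_map.mp hy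
        rw [if_neg]
        intro hq
        exact Finset.disjoint_left.mp N.disj_in_int (hA hq) (hLmem x hx).1
      rw [i1, i2, i3]; ring
    have hle := isMaxOn_iff.mp hgmax g' hg'K
    simp only [hg'def] at hle
    rw [Finset.sum_add_distrib, ← Finset.mul_sum, hAw, mul_one] at hle
    linarith
  -- conclude via le_csSup
  have hGfeas : N.Feasible g :=
    ⟨fun e => (hg01 e).1, fun e => le_trans (hg01 e).2 (hf.2.1 e), hgcons⟩
  have hmem : (∑ e ∈ A, g e) ∈ {x : ℝ | ∃ f' : E → ℝ, N.Feasible f' ∧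
      (∀ e ∈ (N.Ein \ A) ∪ (N.Eout \ (N.Eout \ B)), f' e = 0) ∧ x = ∑ e ∈ A, f' e} := by
    refine ⟨g, hGfeas, ?_, rfl⟩
    rw [Finset.sdiff_sdiff_eq_self hB]
    exact hgZ
  have hbdd : BddAbove {x : ℝ | ∃ f' : E → ℝ, N.Feasible f' ∧
      (∀ e ∈ (N.Ein \ A) ∪ (N.Eout \ (N.Eout \ B)), f' e = 0) ∧ x = ∑ e ∈ A, f' e} := by
    refine ⟨∑ e ∈ A, N.cap e, ?_⟩
    rintro x ⟨f', hf', -, rfl⟩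
    exact Finset.sum_le_sum fun e _ => hf'.2.1 e
  calc ∑ e ∈ A, f e - ∑ e ∈ B, f e ≤ ∑ e ∈ A, g e := claim
    _ ≤ N.maxFromTo A (N.Eout \ B) := le_csSup hbdd hmem

/-- for every feasible flow `f`, and `A ⊆ Ein`, `B ⊆ Eout`:
`-maxFromTo N (Ein \ A) B ≤ f(A) - f(B) ≤ maxFromTo N A (Eout \ B)`. -/
theorem stmt7 (N : FlowNetwork V E) (f : E → ℝ) (hf : N.Feasible f)
    (A B : Finset E) (hA : A ⊆ N.Ein) (hB : B ⊆ N.Eout) :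
    -(N.maxFromTo (N.Ein \ A) B) ≤ ∑ e ∈ A, f e - ∑ e ∈ B, f e ∧
    ∑ e ∈ A, f e - ∑ e ∈ B, f e ≤ N.maxFromTo A (N.Eout \ B) := by
  constructor
  · have hk := key N f hf (N.Ein \ A) (N.Eout \ B) Finset.sdiff_subset Finset.sdiff_subset
    rw [Finset.sdiff_sdiff_eq_self hB] at hk
    have h1 : ∑ e ∈ N.Ein \ A, f e + ∑ e ∈ A, f e = ∑ e ∈ N.Ein, f e := Finset.sum_sdiff hA
    have h2 : ∑ e ∈ N.Eout \ B, f e + ∑ e ∈ B, f e = ∑ e ∈ N.Eout, f e := Finset.sum_sdiff hB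
    have h3 := sum_in_eq_sum_out_s7 N f hf.2.2
    linarith
  · exact key N f hf A B hA hB

end FlowNetwork
end
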